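/- arXiv:2012.06244 — 7 statements merged into one kernel-verified Lean document; each statement's English description precedes it below -/
import Mathlib

section
/- Let f : ℝ → ℝ be defined by f(x) = −log(log(1 + exp(−x))) (so that the logistic loss ℓ(x) = log(1 + exp(−x)) equals exp(−f(x))). Then f is differentiable on ℝ, its derivative is strictly positive at every point (hence f is strictly increasing and injective), and f(x)/x → 1 as x → +∞. -/
open Real Filter

/-- The function `f(x) = -log(log(1 + exp(-x)))` associated to the logistic loss
`ℓ(x) = log(1 + exp(-x)) = exp(-f x)` is differentiable, has strictly positive
derivative everywhere (hence is strictly increasing and injective), and satisfies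
`f(x)/x → 1` as `x → +∞`. -/
theorem logistic_loss_f_properties (f : ℝ → ℝ)
    (hf : ∀ x, f x = -Real.log (Real.log (1 + Real.exp (-x)))) :
    Differentiable ℝ f ∧ (∀ x, 0 < deriv f x) ∧ StrictMono f ∧ Function.Injective f ∧
      Filter.Tendsto (fun x => f x / x) Filter.atTop (nhds 1) := by
  have hfe : f = fun x => -Real.log (Real.log (1 + Real.exp (-x))) := funext hf
  have h1 : ∀ x : ℝ, (0:ℝ) < 1 + Real.exp (-x) := fun x => by positivity
  have hlogpos : ∀ x : ℝ, 0 < Real.log (1 + Real.exp (-x)) := fun x =>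
    Real.log_pos (by linarith [Real.exp_pos (-x)])
  have key : ∀ x : ℝ, HasDerivAt f
      (Real.exp (-x) / ((1 + Real.exp (-x)) * Real.log (1 + Real.exp (-x)))) x := by
    intro x
    have hx : HasDerivAt (fun x : ℝ => 1 + Real.exp (-x)) (-Real.exp (-x)) x := by
      have h := ((Real.hasDerivAt_exp (-x)).comp x ((hasDerivAt_id x).neg)).const_add (1:ℝ)
      simpa using h
    have hg : HasDerivAt (fun x : ℝ => Real.log (1 + Real.exp (-x)))
        (-Real.exp (-x) / (1 + Real.exp (-x))) x := hx.log (h1 x).ne'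
    have hF : HasDerivAt (fun x : ℝ => -Real.log (Real.log (1 + Real.exp (-x))))
        (-((-Real.exp (-x) / (1 + Real.exp (-x))) / Real.log (1 + Real.exp (-x)))) x :=
      (hg.log (hlogpos x).ne').neg
    rw [hfe]
    convert hF using 1
    field_simp
  have hdiff : Differentiable ℝ f := fun x => (key x).differentiableAt
  have hderiv : ∀ x, 0 < deriv f x := by
    intro x
    rw [(key x).deriv]
    have := hlogpos x
    have := h1 x
    positivity
  have hmono : StrictMono f := strictMono_of_deriv_pos hderiv
  refine ⟨hdiff, hderiv, hmono, hmono.injective, ?_⟩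
  -- asymptotics
  have hub : ∀ x : ℝ, 0 ≤ x → f x ≤ x + 1 := by
    intro x hx
    have hlb : Real.exp (-x) / (1 + Real.exp (-x)) ≤ Real.log (1 + Real.exp (-x)) := by
      have h := Real.log_le_sub_one_of_pos (x := (1 + Real.exp (-x))⁻¹) (by positivity)
      rw [Real.log_inv] at h
      have h2 : (1 + Real.exp (-x))⁻¹ - 1 = -(Real.exp (-x) / (1 + Real.exp (-x))) := by
        field_simp
        ring
      rw [h2] at h
      linarith
    have hpos : (0:ℝ) < Real.exp (-x) / (1 + Real.exp (-x)) := by positivity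
    have : Real.log (Real.exp (-x) / (1 + Real.exp (-x))) ≤
        Real.log (Real.log (1 + Real.exp (-x))) := Real.log_le_log hpos hlb
    rw [Real.log_div (Real.exp_pos _).ne' (h1 x).ne', Real.log_exp] at this
    have hle : Real.log (1 + Real.exp (-x)) ≤ Real.exp (-x) := by
      have := Real.log_le_sub_one_of_pos (h1 x)
      linarith
    have hexp1 : Real.exp (-x) ≤ 1 := Real.exp_le_one_iff.mpr (by linarith)
    rw [hf x]
    linarith
  have hlbf : ∀ x : ℝ, x ≤ f x := by
    intro x
    have hle : Real.log (1 + Real.exp (-x)) ≤ Real.exp (-x) := by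
      have := Real.log_le_sub_one_of_pos (h1 x)
      linarith
    have : Real.log (Real.log (1 + Real.exp (-x))) ≤ Real.log (Real.exp (-x)) :=
      Real.log_le_log (hlogpos x) hle
    rw [Real.log_exp] at this
    rw [hf x]
    linarith
  have hupper : Tendsto (fun x : ℝ => 1 + 1 / x) atTop (nhds 1) := by
    simpa using (tendsto_const_nhds (x := (1:ℝ)) (f := atTop (α := ℝ))).add tendsto_inv_atTop_zero
  refine tendsto_of_tendsto_of_tendsto_of_le_of_le' tendsto_const_nhds hupper ?_ ?_
  · filter_upwards [eventually_gt_atTop (0:ℝ)] with x hx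
    rw [le_div_iff₀ hx, one_mul]
    exact hlbf x
  · filter_upwards [eventually_gt_atTop (0:ℝ)] with x hx
    rw [div_le_iff₀ hx]
    have := hub x hx.le
    have h1x : (1 + 1 / x) * x = x + 1 := by field_simp
    linarith [h1x]
end

section
/- Let p ≥ 1, let L : ℝ^p → ℝ be continuously differentiable and nonnegative, let ε > 0, and let w : [0,∞) → ℝ^p be a differentiable curve satisfying, for every coordinate j and every t ≥ 0, w_j'(t) = −h_j(t) · ∂_j L(w(t)), where h_j(t) = (ε + ∫₀^t (∂_j L(w(τ)))² dτ)^{−1/2} (the AdaGrad flow). Then for every coordinate j, ∫₀^∞ (∂_j L(w(t)))² dt < ∞; consequently h_j(t) converges as t → ∞ to a strictly positive limit h_{∞,j} = (ε + ∫₀^∞ (∂_j L(w(τ)))² dτ)^{−1/2} > 0. -/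
open MeasureTheory Filter


theorem adagrad_aux (f : ℝ → ℝ) (ε C : ℝ) (hε : 0 < ε)
    (hf0 : ∀ t, 0 ≤ f t)
    (hfc : ContinuousOn f (Set.Ici 0))
    (hbound : ∀ t, 0 ≤ t → (∫ τ in Set.Icc (0:ℝ) t, f τ) ≤ C) :
    IntegrableOn f (Set.Ici 0) ∧
    0 < 1 / Real.sqrt (ε + ∫ τ in Set.Ici (0:ℝ), f τ) ∧
    Tendsto (fun t => 1 / Real.sqrt (ε + ∫ τ in Set.Icc (0:ℝ) t, f τ)) atTop
      (nhds (1 / Real.sqrt (ε + ∫ τ in Set.Ici (0:ℝ), f τ))) := by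
  have hicc : ∀ b : ℝ, 0 ≤ b → IntegrableOn f (Set.Icc 0 b) :=
    fun b hb => (hfc.mono (Set.Icc_subset_Ici_self)).integrableOn_compact isCompact_Icc
  have hioc : ∀ b : ℝ, IntegrableOn f (Set.Ioc 0 b) := by
    intro b
    rcases le_or_gt 0 b with hb | hb
    · exact (hicc b hb).mono_set Set.Ioc_subset_Icc_self
    · rw [Set.Ioc_eq_empty (by linarith)]; exact integrableOn_empty
  have heq : ∀ b : ℝ, 0 ≤ b → (∫ τ in Set.Icc (0:ℝ) b, f τ) = ∫ τ in (0:ℝ)..b, f τ := by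
    intro b hb
    rw [intervalIntegral.integral_of_le hb, MeasureTheory.integral_Icc_eq_integral_Ioc]
  have hIoi : IntegrableOn f (Set.Ioi 0) := by
    apply MeasureTheory.integrableOn_Ioi_of_intervalIntegral_norm_bounded C 0 hioc
      (tendsto_id (α := ℝ))
    filter_upwards [eventually_ge_atTop (0:ℝ)] with b hb
    have : (∫ x in (0:ℝ)..b, ‖f x‖) = ∫ τ in Set.Icc (0:ℝ) b, f τ := by
      rw [heq b hb]
      apply intervalIntegral.integral_congr
      intro x _; exact Real.norm_of_nonneg (hf0 x)
    rw [this]; exact hbound b hb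
  have hIci : IntegrableOn f (Set.Ici 0) := by
    rwa [integrableOn_Ici_iff_integrableOn_Ioi]
  refine ⟨hIci, ?_, ?_⟩
  · have hA : 0 ≤ ∫ τ in Set.Ici (0:ℝ), f τ :=
      setIntegral_nonneg measurableSet_Ici (fun x _ => hf0 x)
    have : 0 < Real.sqrt (ε + ∫ τ in Set.Ici (0:ℝ), f τ) := Real.sqrt_pos.2 (by linarith)
    positivity
  · have h1 : Tendsto (fun t => ∫ τ in (0:ℝ)..t, f τ) atTop
        (nhds (∫ τ in Set.Ioi (0:ℝ), f τ)) :=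
      MeasureTheory.intervalIntegral_tendsto_integral_Ioi 0 hIoi tendsto_id
    have h2 : (∫ τ in Set.Ioi (0:ℝ), f τ) = ∫ τ in Set.Ici (0:ℝ), f τ :=
      (MeasureTheory.integral_Ici_eq_integral_Ioi).symm
    have h3 : Tendsto (fun t => ∫ τ in Set.Icc (0:ℝ) t, f τ) atTop
        (nhds (∫ τ in Set.Ici (0:ℝ), f τ)) := by
      rw [← h2]
      apply h1.congr'
      filter_upwards [eventually_ge_atTop (0:ℝ)] with b hb
      exact (heq b hb).symm
    have hcont : ContinuousAt (fun x : ℝ => 1 / Real.sqrt (ε + x))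
        (∫ τ in Set.Ici (0:ℝ), f τ) := by
      have hA : 0 ≤ ∫ τ in Set.Ici (0:ℝ), f τ :=
        setIntegral_nonneg measurableSet_Ici (fun x _ => hf0 x)
      have hne : Real.sqrt (ε + ∫ τ in Set.Ici (0:ℝ), f τ) ≠ 0 :=
        ne_of_gt (Real.sqrt_pos.2 (by linarith))
      exact ContinuousAt.div continuousAt_const
        ((Real.continuous_sqrt.continuousAt).comp (continuousAt_const.add continuousAt_id)) hne
    exact hcont.tendsto.comp h3

theorem adagrad_gcont_unused (p : ℕ)
    (L : EuclideanSpace ℝ (Fin p) → ℝ) (hL : ContDiff ℝ 1 L)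
    (w : ℝ → EuclideanSpace ℝ (Fin p))
    (hwc : ContinuousOn w (Set.Ici 0)) (j : Fin p) :
    ContinuousOn (fun t => (fderiv ℝ L (w t) (EuclideanSpace.single j 1)) ^ 2)
      (Set.Ici 0) := by
  have hfc : Continuous fun x => fderiv ℝ L x := hL.continuous_fderiv one_ne_zero
  have h : Continuous fun x => fderiv ℝ L x (EuclideanSpace.single j 1) :=
    hfc.clm_apply continuous_const
  exact (h.comp_continuousOn hwc).pow 2

theorem adagrad_wcont (p : ℕ) (ε : ℝ)
    (L : EuclideanSpace ℝ (Fin p) → ℝ)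
    (w : ℝ → EuclideanSpace ℝ (Fin p))
    (hw : ∀ j : Fin p, ∀ t ∈ Set.Ici (0:ℝ),
      HasDerivWithinAt (fun s => w s j)
        (-(1 / Real.sqrt (ε + ∫ τ in Set.Icc (0:ℝ) t,
            (fderiv ℝ L (w τ) (EuclideanSpace.single j 1)) ^ 2)) *
          fderiv ℝ L (w t) (EuclideanSpace.single j 1)) (Set.Ici 0) t) :
    ContinuousOn w (Set.Ici 0) := by
  have h1 : ContinuousOn (fun t => ((EuclideanSpace.equiv (Fin p) ℝ) (w t))) (Set.Ici 0) := by
    apply continuousOn_pi.2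
    intro j t ht
    exact (hw j t ht).continuousWithinAt
  have h2 := ((EuclideanSpace.equiv (Fin p) ℝ).symm.continuous.comp_continuousOn h1)
  exact h2


theorem adagrad_gcont' (p : ℕ)
    (L : EuclideanSpace ℝ (Fin p) → ℝ) (hL : ContDiff ℝ 1 L)
    (w : ℝ → EuclideanSpace ℝ (Fin p))
    (hwc : ContinuousOn w (Set.Ici 0)) (j : Fin p) :
    ContinuousOn (fun t => (fderiv ℝ L (w t) (EuclideanSpace.single j 1)) ^ 2)
      (Set.Ici 0) := by
  have hfc : Continuous fun x => fderiv ℝ L x := hL.continuous_fderiv one_ne_zero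
  have h : Continuous fun x => fderiv ℝ L x (EuclideanSpace.single j 1) :=
    hfc.clm_apply continuous_const
  exact (h.comp_continuousOn hwc).pow 2

theorem adagrad_energy (p : ℕ)
    (L : EuclideanSpace ℝ (Fin p) → ℝ) (hL : ContDiff ℝ 1 L) (hL0 : ∀ x, 0 ≤ L x)
    (ε : ℝ) (hε : 0 < ε)
    (w : ℝ → EuclideanSpace ℝ (Fin p))
    (hwc : ContinuousOn w (Set.Ici 0))
    (hw : ∀ j : Fin p, ∀ t ∈ Set.Ici (0:ℝ),
      HasDerivWithinAt (fun s => w s j)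
        (-(1 / Real.sqrt (ε + ∫ τ in Set.Icc (0:ℝ) t,
            (fderiv ℝ L (w τ) (EuclideanSpace.single j 1)) ^ 2)) *
          fderiv ℝ L (w t) (EuclideanSpace.single j 1)) (Set.Ici 0) t) :
    ∀ j : Fin p, ∀ t : ℝ, 0 ≤ t →
      (∫ τ in Set.Icc (0:ℝ) t, (fderiv ℝ L (w τ) (EuclideanSpace.single j 1)) ^ 2)
        ≤ (L (w 0) / 2 + p * Real.sqrt ε) ^ 2 := by
  classical
  have hLd : Differentiable ℝ L := hL.differentiable one_ne_zero
  set g : Fin p → ℝ → ℝ :=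
    fun k t => fderiv ℝ L (w t) (EuclideanSpace.single k 1) with hgdef
  set G : Fin p → ℝ → ℝ :=
    fun k t => ∫ τ in Set.Icc (0:ℝ) t, (fderiv ℝ L (w τ) (EuclideanSpace.single k 1)) ^ 2
    with hGdef
  -- continuity / integrability of g²
  have hgc : ∀ k : Fin p, ContinuousOn (fun t => g k t ^ 2) (Set.Ici 0) :=
    fun k => adagrad_gcont' p L hL w hwc k
  have hicc : ∀ (k : Fin p) (b : ℝ), 0 ≤ b →
      IntegrableOn (fun t => g k t ^ 2) (Set.Icc 0 b) :=
    fun k b hb => ((hgc k).mono Set.Icc_subset_Ici_self).integrableOn_compact isCompact_Icc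
  have hii : ∀ (k : Fin p) (b : ℝ), 0 ≤ b →
      IntervalIntegrable (fun t => g k t ^ 2) volume 0 b :=
    fun k b hb => (intervalIntegrable_iff_integrableOn_Ioc_of_le hb).2
      ((hicc k b hb).mono_set Set.Ioc_subset_Icc_self)
  have hGeq : ∀ (k : Fin p) (b : ℝ), 0 ≤ b →
      G k b = ∫ τ in (0:ℝ)..b, g k τ ^ 2 := by
    intro k b hb
    show (∫ τ in Set.Icc (0:ℝ) b, g k τ ^ 2) = _
    rw [intervalIntegral.integral_of_le hb, MeasureTheory.integral_Icc_eq_integral_Ioc]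
  have hGnn : ∀ (k : Fin p) (t : ℝ), 0 ≤ G k t :=
    fun k t => setIntegral_nonneg measurableSet_Icc fun x _ => sq_nonneg _
  have hGpos : ∀ (k : Fin p) (t : ℝ), 0 < ε + G k t := fun k t => by
    have := hGnn k t; linarith
  -- FTC: right derivative of G
  have hG' : ∀ (k : Fin p) (x : ℝ), 0 ≤ x →
      HasDerivWithinAt (G k) (g k x ^ 2) (Set.Ici x) x := by
    intro k x hx
    have hsub : Set.Ioi x ⊆ Set.Ici (0:ℝ) := fun y hy => le_trans hx (le_of_lt hy)
    have h1 : HasDerivWithinAt (fun u => ∫ τ in (0:ℝ)..u, g k τ ^ 2)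
        (g k x ^ 2) (Set.Ici x) x := by
      apply intervalIntegral.integral_hasDerivWithinAt_right (hii k x hx)
      · exact ⟨Set.Ici 0, mem_of_superset self_mem_nhdsWithin hsub,
          ((hgc k).aestronglyMeasurable measurableSet_Ici)⟩
      · exact ((hgc k) x hx).mono hsub
    exact h1.congr (fun y hy => hGeq k y (le_trans hx hy)) (hGeq k x hx)
  -- derivative of w
  have hwv : ∀ (x : ℝ), 0 ≤ x →
      HasDerivWithinAt w
        (WithLp.toLp 2 (fun k => -(1 / Real.sqrt (ε + G k x)) * g k x) : EuclideanSpace ℝ (Fin p))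
        (Set.Ici x) x := by
    intro x hx
    have h1 : HasDerivWithinAt (fun t => ((EuclideanSpace.equiv (Fin p) ℝ) (w t)))
        (fun k => -(1 / Real.sqrt (ε + G k x)) * g k x) (Set.Ici x) x :=
      hasDerivWithinAt_pi.2 fun k => ((hw k x hx).mono (Set.Ici_subset_Ici.2 hx))
    exact (((EuclideanSpace.equiv (Fin p) ℝ).symm :
        (Fin p → ℝ) →L[ℝ] EuclideanSpace ℝ (Fin p)).hasFDerivAt.comp_hasDerivWithinAt x h1)
  -- chain rule
  have hLw : ∀ (x : ℝ), 0 ≤ x →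
      HasDerivWithinAt (fun t => L (w t))
        (fderiv ℝ L (w x)
          (WithLp.toLp 2 (fun k => -(1 / Real.sqrt (ε + G k x)) * g k x) : EuclideanSpace ℝ (Fin p)))
        (Set.Ici x) x :=
    fun x hx => (hLd (w x)).hasFDerivAt.comp_hasDerivWithinAt x (hwv x hx)
  -- linearity over the basis
  have hlin : ∀ (y : EuclideanSpace ℝ (Fin p)) (u : EuclideanSpace ℝ (Fin p)),
      fderiv ℝ L y u = ∑ k, u k * fderiv ℝ L y (EuclideanSpace.single k 1) := by
    intro y u
    have hu : u = ∑ k, u k • EuclideanSpace.single k (1:ℝ) := by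
      have h := (EuclideanSpace.basisFun (Fin p) ℝ).sum_repr u
      simp only [EuclideanSpace.basisFun_apply, EuclideanSpace.basisFun_repr] at h
      exact h.symm
    conv_lhs => rw [hu]
    rw [map_sum]
    refine Finset.sum_congr rfl fun k _ => ?_
    rw [ContinuousLinearMap.map_smul]
    simp [smul_eq_mul]
  -- energy function has zero right derivative
  have hF' : ∀ (x : ℝ), 0 ≤ x →
      HasDerivWithinAt (fun t => L (w t) + ∑ k, 2 * Real.sqrt (ε + G k t))
        0 (Set.Ici x) x := by
    intro x hx
    have hsq : ∀ k : Fin p,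
        HasDerivWithinAt (fun t => 2 * Real.sqrt (ε + G k t))
          (2 * (1 / (2 * Real.sqrt (ε + G k x)) * (g k x ^ 2))) (Set.Ici x) x := by
      intro k
      have h1 : HasDerivWithinAt (fun t => ε + G k t) (g k x ^ 2) (Set.Ici x) x :=
        (hG' k x hx).const_add ε
      have h2 := (Real.hasDerivAt_sqrt (ne_of_gt (hGpos k x))).comp_hasDerivWithinAt x h1
      exact h2.const_mul 2
    have hsum : HasDerivWithinAt (fun t => ∑ k, 2 * Real.sqrt (ε + G k t))
        (∑ k, 2 * (1 / (2 * Real.sqrt (ε + G k x)) * (g k x ^ 2))) (Set.Ici x) x :=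
      HasDerivWithinAt.fun_sum fun k _ => hsq k
    have htot := (hLw x hx).add hsum
    have hzero :
        ((fderiv ℝ L (w x)) (WithLp.toLp 2 (fun k => -(1 / Real.sqrt (ε + G k x)) * g k x) :
            EuclideanSpace ℝ (Fin p)) +
          ∑ k, 2 * (1 / (2 * Real.sqrt (ε + G k x)) * (g k x ^ 2))) = 0 := by
      rw [hlin (w x) _, ← Finset.sum_add_distrib]
      apply Finset.sum_eq_zero
      intro k _
      have hs : 0 < Real.sqrt (ε + G k x) := Real.sqrt_pos.2 (hGpos k x)
      show -(1 / Real.sqrt (ε + G k x)) * g k x * g k x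
          + 2 * (1 / (2 * Real.sqrt (ε + G k x)) * g k x ^ 2) = 0
      field_simp
      ring
    rw [hzero] at htot
    exact htot
  -- energy is constant
  have hFc : ∀ b : ℝ, 0 ≤ b →
      ContinuousOn (fun t => L (w t) + ∑ k, 2 * Real.sqrt (ε + G k t)) (Set.Icc 0 b) := by
    intro b hb
    apply ContinuousOn.add
    · exact hLd.continuous.comp_continuousOn (hwc.mono Set.Icc_subset_Ici_self)
    · apply continuousOn_finset_sum
      intro k _
      apply continuousOn_const.mul
      apply Real.continuous_sqrt.comp_continuousOn
      apply continuousOn_const.add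
      exact intervalIntegral.continuousOn_primitive_Icc (hicc k b hb)
  have hconst : ∀ t : ℝ, 0 ≤ t →
      (L (w t) + ∑ k, 2 * Real.sqrt (ε + G k t))
        = L (w 0) + ∑ k, 2 * Real.sqrt (ε + G k 0) := by
    intro t ht
    exact constant_of_has_deriv_right_zero (hFc t ht)
      (fun x hx => hF' x hx.1) t ⟨ht, le_rfl⟩
  -- value at 0
  have hG0 : ∀ k : Fin p, G k 0 = 0 := by
    intro k
    simp only [hGdef]
    rw [Set.Icc_self]
    simp [MeasureTheory.Measure.restrict_singleton]
  -- conclude the bound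
  intro j t ht
  have h1 : 2 * Real.sqrt (ε + G j t) ≤ ∑ k, 2 * Real.sqrt (ε + G k t) :=
    Finset.single_le_sum (f := fun k => 2 * Real.sqrt (ε + G k t))
      (fun k _ => by positivity) (Finset.mem_univ j)
  have h2 : (∑ k, 2 * Real.sqrt (ε + G k t)) ≤ L (w t) + ∑ k, 2 * Real.sqrt (ε + G k t) := by
    have := hL0 (w t); linarith
  have h3 : L (w 0) + ∑ k, 2 * Real.sqrt (ε + G k 0)
      = L (w 0) + 2 * p * Real.sqrt ε := by
    have : ∀ k : Fin p, 2 * Real.sqrt (ε + G k 0) = 2 * Real.sqrt ε := by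
      intro k; rw [hG0 k, add_zero]
    rw [Finset.sum_congr rfl fun k _ => this k, Finset.sum_const, Finset.card_univ,
      Fintype.card_fin]
    push_cast
    ring
  have h4 : 2 * Real.sqrt (ε + G j t) ≤ L (w 0) + 2 * p * Real.sqrt ε := by
    have := hconst t ht
    linarith [h1, h2]
  have h5 : Real.sqrt (ε + G j t) ≤ L (w 0) / 2 + p * Real.sqrt ε := by linarith
  have h6 : Real.sqrt (ε + G j t) ^ 2 = ε + G j t :=
    Real.sq_sqrt (le_of_lt (hGpos j t))
  have h7 : (0:ℝ) ≤ Real.sqrt (ε + G j t) := Real.sqrt_nonneg _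
  have h8 : ε + G j t ≤ (L (w 0) / 2 + p * Real.sqrt ε) ^ 2 := by nlinarith
  show G j t ≤ _
  linarith

/-- Along the AdaGrad flow `w'(t) = -h(t) ⊙ ∇L(w(t))` with conditioner
`h_j(t) = (ε + ∫₀^t (∂_j L(w τ))² dτ)^{-1/2}`, each squared partial derivative of the
(nonnegative, C¹) loss along the flow is integrable on `[0,∞)`; consequently each
component of the conditioner converges to a strictly positive limit. -/
theorem adagrad_flow_conditioner_converges (p : ℕ) (hp : 1 ≤ p)
    (L : EuclideanSpace ℝ (Fin p) → ℝ) (hL : ContDiff ℝ 1 L) (hL0 : ∀ x, 0 ≤ L x)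
    (ε : ℝ) (hε : 0 < ε)
    (w : ℝ → EuclideanSpace ℝ (Fin p))
    (hw : ∀ j : Fin p, ∀ t ∈ Set.Ici (0:ℝ),
      HasDerivWithinAt (fun s => w s j)
        (-(1 / Real.sqrt (ε + ∫ τ in Set.Icc (0:ℝ) t,
            (fderiv ℝ L (w τ) (EuclideanSpace.single j 1)) ^ 2)) *
          fderiv ℝ L (w t) (EuclideanSpace.single j 1)) (Set.Ici 0) t) :
    ∀ j : Fin p,
      IntegrableOn
        (fun t => (fderiv ℝ L (w t) (EuclideanSpace.single j 1)) ^ 2) (Set.Ici 0) ∧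
      0 < 1 / Real.sqrt (ε + ∫ τ in Set.Ici (0:ℝ),
            (fderiv ℝ L (w τ) (EuclideanSpace.single j 1)) ^ 2) ∧
      Tendsto
        (fun t => 1 / Real.sqrt (ε + ∫ τ in Set.Icc (0:ℝ) t,
            (fderiv ℝ L (w τ) (EuclideanSpace.single j 1)) ^ 2)) atTop
        (nhds (1 / Real.sqrt (ε + ∫ τ in Set.Ici (0:ℝ),
            (fderiv ℝ L (w τ) (EuclideanSpace.single j 1)) ^ 2))) := by
  intro j
  have hwc : ContinuousOn w (Set.Ici 0) := adagrad_wcont p ε L w hw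
  have hbd := adagrad_energy p L hL hL0 ε hε w hwc hw
  exact adagrad_aux
    (fun t => (fderiv ℝ L (w t) (EuclideanSpace.single j 1)) ^ 2) ε
    ((L (w 0) / 2 + p * Real.sqrt ε) ^ 2) hε (fun t => sq_nonneg _)
    (adagrad_gcont' p L hL w hwc j) (fun t ht => hbd j t ht)
end

section
/- Let g : [0,∞) → ℝ be continuous with ∫₀^∞ g(t)² dt < ∞, let b ∈ (0,1), ε > 0, and define F(t) = ∫₀^t (1−b) e^{−(1−b)(t−τ)} g(τ)² dτ. Then F is continuously differentiable, and both the positive part and the negative part of the function t ↦ F'(t) / (2(ε + F(t))) (which equals the derivative of t ↦ log √((ε + F(t))/ε)) are Lebesgue integrable on [0,∞): ∫₀^∞ max(0, F'(t)/(2(ε+F(t)))) dt < ∞ and ∫₀^∞ max(0, −F'(t)/(2(ε+F(t)))) dt < ∞. -/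
open MeasureTheory

/-- For continuous `g` with `∫₀^∞ g² < ∞` and the exponential moving average
`F(t) = ∫₀^t (1-b) e^{-(1-b)(t-τ)} g(τ)² dτ`, the function `F` is continuously
differentiable on `[0,∞)` with derivative `F'(t) = (1-b)(g(t)² - F(t))`, and both the
positive and the negative part of `t ↦ F'(t)/(2(ε + F(t)))` (the derivative of
`t ↦ log √((ε+F(t))/ε)`) are Lebesgue integrable on `[0,∞)`. -/
theorem rmsprop_log_learning_rate_integrable (g : ℝ → ℝ) (hg_cont : Continuous g)
    (hg_int : IntegrableOn (fun t => (g t) ^ 2) (Set.Ici 0))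
    (b : ℝ) (hb : b ∈ Set.Ioo (0:ℝ) 1) (ε : ℝ) (hε : 0 < ε)
    (F : ℝ → ℝ)
    (hF : ∀ t, F t = ∫ τ in Set.Icc (0:ℝ) t,
      (1 - b) * Real.exp (-(1 - b) * (t - τ)) * (g τ) ^ 2) :
    (∀ t ∈ Set.Ici (0:ℝ),
      HasDerivWithinAt F ((1 - b) * ((g t) ^ 2 - F t)) (Set.Ici 0) t) ∧
    ContinuousOn (fun t => (1 - b) * ((g t) ^ 2 - F t)) (Set.Ici 0) ∧
    IntegrableOn
      (fun t => max 0 (((1 - b) * ((g t) ^ 2 - F t)) / (2 * (ε + F t)))) (Set.Ici 0) ∧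
    IntegrableOn
      (fun t => max 0 (-(((1 - b) * ((g t) ^ 2 - F t)) / (2 * (ε + F t))))) (Set.Ici 0) := by
  obtain ⟨hb0, hb1⟩ := hb
  have hc : 0 < 1 - b := by linarith
  set c : ℝ := 1 - b with hcdef
  -- the primitive G
  set G : ℝ → ℝ := fun t => ∫ τ in (0:ℝ)..t, Real.exp (c * τ) * g τ ^ 2 with hGdef
  have hcont_integrand : Continuous fun τ : ℝ => Real.exp (c * τ) * g τ ^ 2 :=
    (Real.continuous_exp.comp (continuous_const.mul continuous_id)).mul (hg_cont.pow 2)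
  have hG : ∀ t, HasDerivAt G (Real.exp (c * t) * g t ^ 2) t := fun t =>
    (hcont_integrand.integral_hasStrictDerivAt 0 t).hasDerivAt
  have hGcont : Continuous G :=
    continuous_iff_continuousAt.2 fun t => (hG t).continuousAt
  -- F equals a nice closed form on `Ici 0`
  have hFeq : ∀ t ∈ Set.Ici (0:ℝ), F t = c * Real.exp (-c * t) * G t := by
    intro t ht
    rw [hF, MeasureTheory.integral_Icc_eq_integral_Ioc, ← intervalIntegral.integral_of_le ht,
      hGdef]
    rw [← intervalIntegral.integral_const_mul]
    apply intervalIntegral.integral_congr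
    intro τ _
    simp only
    rw [show -c * (t - τ) = -c * t + c * τ by ring, Real.exp_add]
    ring
  -- F is nonnegative
  have hFnn : ∀ t, 0 ≤ F t := by
    intro t
    rw [hF]
    apply setIntegral_nonneg measurableSet_Icc
    intro τ _
    have := Real.exp_pos (-c * (t - τ))
    positivity
  have hden : ∀ t, 0 < ε + F t := fun t => by linarith [hFnn t]
  -- differentiability
  have hFderiv : ∀ t ∈ Set.Ici (0:ℝ),
      HasDerivWithinAt F (c * (g t ^ 2 - F t)) (Set.Ici 0) t := by
    intro t ht
    have h_lin : HasDerivAt (fun s : ℝ => -c * s) (-c) t := by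
      simpa using (hasDerivAt_id t).const_mul (-c)
    have h_exp : HasDerivAt (fun s : ℝ => Real.exp (-c * s))
        (Real.exp (-c * t) * -c) t := h_lin.exp
    have h1 : HasDerivAt (fun s : ℝ => c * Real.exp (-c * s) * G s)
        (c * (Real.exp (-c * t) * -c) * G t +
          c * Real.exp (-c * t) * (Real.exp (c * t) * g t ^ 2)) t :=
      (h_exp.const_mul c).mul (hG t)
    have hee : Real.exp (-c * t) * Real.exp (c * t) = 1 := by
      rw [← Real.exp_add]; simp
    have h2 : c * (Real.exp (-c * t) * -c) * G t +
        c * Real.exp (-c * t) * (Real.exp (c * t) * g t ^ 2)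
        = c * (g t ^ 2 - F t) := by
      rw [hFeq t ht]
      linear_combination (c * g t ^ 2) * hee
    rw [← h2]
    exact (h1.hasDerivWithinAt).congr (fun s hs => hFeq s hs) (hFeq t ht)
  -- continuity of F on Ici 0
  have hFcont : ContinuousOn F (Set.Ici 0) :=
    (((continuous_const.mul
      (Real.continuous_exp.comp (continuous_const.mul continuous_id))).mul
      hGcont).continuousOn).congr hFeq
  have hDcont : ContinuousOn (fun t => c * (g t ^ 2 - F t)) (Set.Ici 0) :=
    continuousOn_const.mul ((hg_cont.pow 2).continuousOn.sub hFcont)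
  -- continuity (hence a.e. strong measurability) of the ratio
  have hRcont : ContinuousOn
      (fun t => (c * (g t ^ 2 - F t)) / (2 * (ε + F t))) (Set.Ici 0) := by
    apply hDcont.div (continuousOn_const.mul (continuousOn_const.add hFcont))
    intro t _
    have := hden t
    exact (mul_pos two_pos this).ne'
  -- F(0) = 0
  have hF0 : F 0 = 0 := by
    rw [hF]
    simp [Set.Icc_self]
  -- integral bound: ∫_0^T F ≤ M where M = ∫_{Ici 0} g²
  set M : ℝ := ∫ t in Set.Ici (0:ℝ), g t ^ 2 with hMdef
  have hkey : ∀ T : ℝ, 0 ≤ T → (∫ t in (0:ℝ)..T, F t) ≤ M := by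
    intro T hT
    have hIccsub : Set.Icc (0:ℝ) T ⊆ Set.Ici 0 := fun x hx => hx.1
    have hFci : ContinuousOn F (Set.Icc 0 T) := hFcont.mono hIccsub
    have hFii : IntervalIntegrable F volume 0 T :=
      (hFci.mono (by rw [Set.uIcc_of_le hT])).intervalIntegrable
    have hgii : IntervalIntegrable (fun t => g t ^ 2) volume 0 T :=
      (hg_cont.pow 2).intervalIntegrable 0 T
    have hDii : IntervalIntegrable (fun t => c * (g t ^ 2 - F t)) volume 0 T :=
      ((hDcont.mono hIccsub).mono (by rw [Set.uIcc_of_le hT])).intervalIntegrable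
    have hftc : (∫ t in (0:ℝ)..T, c * (g t ^ 2 - F t)) = F T - F 0 := by
      apply intervalIntegral.integral_eq_sub_of_hasDeriv_right_of_le hT hFci _ hDii
      intro x hx
      exact (hFderiv x (le_of_lt hx.1)).mono
        (fun y hy => le_trans (le_of_lt hx.1) (le_of_lt hy))
    have hsplit : (∫ t in (0:ℝ)..T, c * (g t ^ 2 - F t))
        = c * (∫ t in (0:ℝ)..T, g t ^ 2) - c * (∫ t in (0:ℝ)..T, F t) := by
      rw [show (fun t => c * (g t ^ 2 - F t)) = fun t => c * g t ^ 2 - c * F t by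
        funext t; ring]
      rw [intervalIntegral.integral_sub (hgii.const_mul c) (hFii.const_mul c),
        intervalIntegral.integral_const_mul, intervalIntegral.integral_const_mul]
    have hFT : 0 ≤ F T := hFnn T
    have h1 : c * (∫ t in (0:ℝ)..T, F t) ≤ c * (∫ t in (0:ℝ)..T, g t ^ 2) := by
      rw [hF0] at hftc
      nlinarith [hftc, hsplit]
    have h2 : (∫ t in (0:ℝ)..T, F t) ≤ ∫ t in (0:ℝ)..T, g t ^ 2 :=
      le_of_mul_le_mul_left h1 hc
    refine h2.trans ?_
    rw [intervalIntegral.integral_of_le hT]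
    apply setIntegral_mono_set hg_int
    · exact Filter.Eventually.of_forall fun x => sq_nonneg (g x)
    · exact Filter.Eventually.of_forall fun x hx => le_of_lt hx.1
  -- F is integrable on Ici 0
  have hFint : IntegrableOn F (Set.Ici 0) := by
    rw [integrableOn_Ici_iff_integrableOn_Ioi]
    apply integrableOn_Ioi_of_intervalIntegral_norm_bounded M 0
      (f := F) (l := Filter.atTop) (b := id) _ Filter.tendsto_id
    · filter_upwards [Filter.eventually_ge_atTop (0:ℝ)] with i hi
      have : (∫ x in (0:ℝ)..(id i), ‖F x‖) = ∫ x in (0:ℝ)..i, F x :=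
        intervalIntegral.integral_congr fun x _ => Real.norm_of_nonneg (hFnn x)
      rw [this]
      exact hkey i hi
    · intro i
      rcases le_or_gt i 0 with h | h
      · rw [show Set.Ioc (0:ℝ) (id i) = ∅ from Set.Ioc_eq_empty (not_lt.2 h)]
        exact integrableOn_empty
      · exact ((hFcont.mono (fun x hx => hx.1)).integrableOn_Icc (a := 0) (b := i)).mono_set
          Set.Ioc_subset_Icc_self
  constructor
  · exact hFderiv
  constructor
  · exact hDcont
  -- positive part
  have hmax_cont : ContinuousOn
      (fun t => max 0 ((c * (g t ^ 2 - F t)) / (2 * (ε + F t)))) (Set.Ici 0) :=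
    fun t ht => (continuousWithinAt_const).max (hRcont t ht)
  have hmaxneg_cont : ContinuousOn
      (fun t => max 0 (-((c * (g t ^ 2 - F t)) / (2 * (ε + F t))))) (Set.Ici 0) :=
    fun t ht => (continuousWithinAt_const).max (hRcont t ht).neg
  constructor
  · apply Integrable.mono' (hg_int.const_mul (c / (2 * ε)))
      (hmax_cont.aestronglyMeasurable measurableSet_Ici)
    rw [ae_restrict_iff' measurableSet_Ici]
    apply Filter.Eventually.of_forall
    intro t ht
    have hFt := hFnn t
    have hdt := hden t
    rw [Real.norm_of_nonneg (le_max_left _ _)]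
    apply max_le
    · positivity
    · calc (c * (g t ^ 2 - F t)) / (2 * (ε + F t))
          ≤ (c * g t ^ 2) / (2 * ε) := by
            apply div_le_div₀ (by positivity) (by nlinarith) (by linarith) (by linarith)
        _ = c / (2 * ε) * g t ^ 2 := by ring
  -- negative part
  · apply Integrable.mono' (hFint.const_mul (c / (2 * ε)))
      (hmaxneg_cont.aestronglyMeasurable measurableSet_Ici)
    rw [ae_restrict_iff' measurableSet_Ici]
    apply Filter.Eventually.of_forall
    intro t ht
    have hFt := hFnn t
    have hdt := hden t
    have hg2 := sq_nonneg (g t)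
    rw [Real.norm_of_nonneg (le_max_left _ _)]
    apply max_le
    · positivity
    · have heq : -((c * (g t ^ 2 - F t)) / (2 * (ε + F t)))
          = (c * (F t - g t ^ 2)) / (2 * (ε + F t)) := by ring
      rw [heq]
      calc (c * (F t - g t ^ 2)) / (2 * (ε + F t))
          ≤ (c * F t) / (2 * ε) := by
            apply div_le_div₀ (by positivity) (by nlinarith) (by linarith) (by linarith)
        _ = c / (2 * ε) * F t := by ring
end

section
/- Consider the adaptive gradient flow for the exponential-loss empirical risk with the separability assumption. Define the surrogate norm ρ(t) = ‖β(t)^{−1/2} ⊙ v(t)‖ and the surrogate margin γ̃(t) = log(1/L̃(v(t))) / ρ(t)^L. Then there exists a time t₁ ≥ t₀ such that for all t ≥ t₁, γ̃(t) ≥ e^{−1/2} · γ̃(t₁). -/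
open MeasureTheory Filter

lemma clm_apply_eq_sum {p : ℕ} (f : EuclideanSpace ℝ (Fin p) →L[ℝ] ℝ)
    (x : EuclideanSpace ℝ (Fin p)) :
    f x = ∑ j, x j * f (EuclideanSpace.single j 1) := by
  have hx : x = ∑ j, x j • EuclideanSpace.single j (1:ℝ) := by
    have := (EuclideanSpace.basisFun (Fin p) ℝ).sum_repr x
    simpa [EuclideanSpace.basisFun_apply, EuclideanSpace.basisFun_repr] using this.symm
  conv_lhs => rw [hx]
  rw [map_sum]
  simp [smul_eq_mul]

lemma hom_zero {p : ℕ} {L : ℝ} (hL : 0 < L) (f : EuclideanSpace ℝ (Fin p) → ℝ)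
    (hhom : ∀ α : ℝ, 0 < α → ∀ v, f (α • v) = α ^ L * f v) : f 0 = 0 := by
  have h := hhom 2 (by norm_num) 0
  rw [smul_zero] at h
  have h2 : (1:ℝ) < (2:ℝ) ^ L :=
    Real.one_lt_rpow_iff_of_pos (by norm_num) |>.2 (Or.inl ⟨by norm_num, hL⟩)
  nlinarith

lemma euler_identity {p : ℕ} {L : ℝ} (hL : 0 < L) (f : EuclideanSpace ℝ (Fin p) → ℝ)
    (hf : ContDiff ℝ 1 f) (hhom : ∀ α : ℝ, 0 < α → ∀ v, f (α • v) = α ^ L * f v)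
    (x : EuclideanSpace ℝ (Fin p)) : fderiv ℝ f x x = L * f x := by
  have hdiff : Differentiable ℝ f := hf.differentiable one_ne_zero
  have h1 : HasDerivAt (fun α : ℝ => f (α • x)) (fderiv ℝ f x x) 1 := by
    have hg : HasDerivAt (fun α : ℝ => α • x) ((1:ℝ) • x) 1 := (hasDerivAt_id 1).smul_const x
    have := (hdiff ((1:ℝ) • x)).hasFDerivAt.comp_hasDerivAt 1 hg
    simpa [one_smul, Function.comp_def] using this
  have h2 : HasDerivAt (fun α : ℝ => α ^ L * f x) (L * f x) 1 := by
    have := (Real.hasDerivAt_rpow_const (x := (1:ℝ)) (p := L) (Or.inl one_ne_zero)).mul_const (f x)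
    simpa using this
  have heq : (fun α : ℝ => f (α • x)) =ᶠ[nhds 1] fun α : ℝ => α ^ L * f x := by
    filter_upwards [Ioi_mem_nhds (show (0:ℝ) < 1 by norm_num)] with α hα
    exact hhom α hα x
  have h1' : HasDerivAt (fun α : ℝ => α ^ L * f x) (fderiv ℝ f x x) 1 :=
    h1.congr_of_eventuallyEq heq.symm
  exact h1'.unique h2

lemma ltil_hasFDerivAt {p N : ℕ} (q : Fin N → EuclideanSpace ℝ (Fin p) → ℝ)
    (hq : ∀ i, ContDiff ℝ 1 (q i))
    (Ltil : EuclideanSpace ℝ (Fin p) → ℝ)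
    (hLtil : ∀ x, Ltil x = ∑ i, Real.exp (-(q i x)))
    (x : EuclideanSpace ℝ (Fin p)) :
    HasFDerivAt Ltil (∑ i, (-(Real.exp (-(q i x)))) • fderiv ℝ (q i) x) x := by
  have : Ltil = fun x => ∑ i, Real.exp (-(q i x)) := funext hLtil
  rw [this]
  apply HasFDerivAt.fun_sum
  intro i _
  have hd : HasFDerivAt (fun y => -(q i y)) (-(fderiv ℝ (q i) x)) x :=
    (((hq i).differentiable one_ne_zero x).hasFDerivAt).neg
  have := hd.exp
  simpa [smul_neg, neg_smul] using this

set_option maxHeartbeats 1000000 in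
/-- Along an adaptive gradient flow for the exponential-loss empirical risk of
`L`-homogeneous `C¹` functions `q i` satisfying the separability assumption, the
surrogate margin `γ̃(t) = log(1/L̃(v t)) / ρ(t)^L`, with surrogate norm
`ρ(t) = ‖β(t)^{-1/2} ⊙ v(t)‖`, satisfies `γ̃(t) ≥ e^{-1/2} γ̃(t₁)` for all `t ≥ t₁`,
for some time `t₁ ≥ t₀`. -/
theorem surrogate_margin_lower_bound (p N : ℕ) (hp : 1 ≤ p) (hN : 1 ≤ N)
    (L : ℝ) (hL : 0 < L)
    (q : Fin N → EuclideanSpace ℝ (Fin p) → ℝ)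
    (hq : ∀ i, ContDiff ℝ 1 (q i))
    (hhom : ∀ i, ∀ α : ℝ, 0 < α → ∀ v, q i (α • v) = α ^ L * q i v)
    (Ltil : EuclideanSpace ℝ (Fin p) → ℝ)
    (hLtil : ∀ x, Ltil x = ∑ i, Real.exp (-(q i x)))
    (v : ℝ → EuclideanSpace ℝ (Fin p))
    (β β' : ℝ → Fin p → ℝ)
    (hβpos : ∀ t ∈ Set.Ici (0:ℝ), ∀ j, 0 < β t j)
    (hβderiv : ∀ j, ∀ t ∈ Set.Ici (0:ℝ),
      HasDerivWithinAt (fun s => β s j) (β' t j) (Set.Ici 0) t)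
    (hβ'cont : ∀ j, ContinuousOn (fun t => β' t j) (Set.Ici 0))
    (hβlim : ∀ j, Tendsto (fun t => β t j) atTop (nhds 1))
    (hβint : ∀ j, IntegrableOn (fun t => |β' t j / β t j|) (Set.Ici 0))
    (hflow : ∀ j, ∀ t ∈ Set.Ici (0:ℝ),
      HasDerivWithinAt (fun s => v s j)
        (-(β t j) * fderiv ℝ Ltil (v t) (EuclideanSpace.single j 1)) (Set.Ici 0) t)
    (t₀ : ℝ) (ht₀ : 0 ≤ t₀) (hsep : Ltil (v t₀) < 1)
    (ρ γ : ℝ → ℝ)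
    (hρ : ∀ t, ρ t = Real.sqrt (∑ j, ((β t j) ^ (-(1/2) : ℝ) * v t j) ^ 2))
    (hγ : ∀ t, γ t = Real.log (1 / Ltil (v t)) / (ρ t) ^ L) :
    ∃ t₁, t₀ ≤ t₁ ∧ ∀ t, t₁ ≤ t → Real.exp (-(1/2)) * γ t₁ ≤ γ t := by
  classical
  -- Notation
  set g : ℝ → Fin p → ℝ := fun t j => fderiv ℝ Ltil (v t) (EuclideanSpace.single j 1) with hgdef
  set G : ℝ → ℝ := fun t => Ltil (v t) with hGdef
  set a : ℝ → ℝ := fun t => -Real.log (G t) with hadef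
  set R : ℝ → ℝ := fun t => ∑ j, (v t j)^2 / β t j with hRdef
  set P : ℝ → ℝ := fun t => ∑ i, q i (v t) * Real.exp (-(q i (v t))) with hPdef
  set Q : ℝ → ℝ := fun t => ∑ j, β t j * (g t j)^2 with hQdef
  set b : ℝ → ℝ := fun t => ∑ j, |β' t j / β t j| with hbdef
  set Dr : ℝ → ℝ := fun t => ∑ j, ((v t j)^2 / β t j) * (β' t j / β t j) with hDrdef
  have hqdiff : ∀ i, Differentiable ℝ (q i) := fun i => (hq i).differentiable one_ne_zero
  have hfd : ∀ x, HasFDerivAt Ltil (∑ i, (-(Real.exp (-(q i x)))) • fderiv ℝ (q i) x) x :=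
    ltil_hasFDerivAt q hq Ltil hLtil
  have hfx : ∀ x, fderiv ℝ Ltil x = ∑ i, (-(Real.exp (-(q i x)))) • fderiv ℝ (q i) x :=
    fun x => (hfd x).fderiv
  have hGpos : ∀ t, 0 < G t := by
    intro t
    rw [hGdef]
    simp only [hLtil]
    have : Nonempty (Fin N) := Fin.pos_iff_nonempty.1 hN
    exact Finset.sum_pos (fun i _ => Real.exp_pos _) Finset.univ_nonempty
  -- Euler identity for Ltil
  have hEulerL : ∀ t : ℝ, (fderiv ℝ Ltil (v t)) (v t) = -(L * P t) := by
    intro t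
    rw [hfx (v t), ContinuousLinearMap.sum_apply]
    have h1 : ∀ i : Fin N, ((-(Real.exp (-(q i (v t))))) • fderiv ℝ (q i) (v t)) (v t)
        = -(Real.exp (-(q i (v t))) * (L * q i (v t))) := by
      intro i
      rw [ContinuousLinearMap.smul_apply, euler_identity hL (q i) (hq i) (hhom i) (v t),
        smul_eq_mul]
      ring
    rw [Finset.sum_congr rfl (fun i _ => h1 i)]
    rw [hPdef]
    simp only [Finset.mul_sum, ← Finset.sum_neg_distrib]
    exact Finset.sum_congr rfl (fun i _ => by ring)
  have hclm : ∀ t (x : EuclideanSpace ℝ (Fin p)),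
      (fderiv ℝ Ltil (v t)) x = ∑ j, x j * g t j := by
    intro t x
    exact clm_apply_eq_sum (fderiv ℝ Ltil (v t)) x
  -- the vector-valued derivative of v
  have hvd : ∀ t ∈ Set.Ici (0:ℝ),
      HasDerivWithinAt v (WithLp.toLp 2 (fun j => -(β t j) * g t j) : EuclideanSpace ℝ (Fin p))
        (Set.Ici 0) t := by
    intro t ht
    have hw : HasDerivWithinAt (fun s => (fun j => v s j : Fin p → ℝ))
        (fun j => -(β t j) * g t j) (Set.Ici 0) t :=
      hasDerivWithinAt_pi.2 (fun j => hflow j t ht)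
    have e := PiLp.continuousLinearEquiv 2 ℝ (fun _ : Fin p => ℝ)
    exact ((PiLp.continuousLinearEquiv 2 ℝ (fun _ : Fin p => ℝ)).symm.toContinuousLinearMap.hasFDerivAt).comp_hasDerivWithinAt t hw
  -- derivative of G
  have hGd : ∀ t ∈ Set.Ici (0:ℝ), HasDerivWithinAt G (-(Q t)) (Set.Ici 0) t := by
    intro t ht
    have h1 := (hfd (v t)).comp_hasDerivWithinAt t (hvd t ht)
    have h2 : (∑ i, (-(Real.exp (-(q i (v t))))) • fderiv ℝ (q i) (v t))
          (WithLp.toLp 2 (fun j => -(β t j) * g t j) : EuclideanSpace ℝ (Fin p)) = -(Q t) := by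
      rw [← hfx (v t), hclm t]
      rw [hQdef]
      simp only [← Finset.sum_neg_distrib]
      exact Finset.sum_congr rfl (fun j _ => by ring)
    rw [h2] at h1
    exact h1
  have hQnonneg : ∀ t ∈ Set.Ici (0:ℝ), 0 ≤ Q t := by
    intro t ht
    exact Finset.sum_nonneg fun j _ => mul_nonneg (hβpos t ht j).le (sq_nonneg _)
  have haD : ∀ t ∈ Set.Ici (0:ℝ), HasDerivWithinAt a (Q t / G t) (Set.Ici 0) t := by
    intro t ht
    have := ((hGd t ht).log (hGpos t).ne').neg
    rw [neg_div, neg_neg] at this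
    exact this
  have hamono : MonotoneOn a (Set.Ici (0:ℝ)) := by
    apply monotoneOn_of_hasDerivWithinAt_nonneg (convex_Ici 0)
      (fun t ht => (haD t ht).continuousWithinAt)
      (fun t ht => ((haD t (interior_subset ht)).mono interior_subset))
      (fun t ht => div_nonneg (hQnonneg t (interior_subset ht)) (hGpos t).le)
  have ha₀pos : 0 < a t₀ := by
    have := Real.log_neg (hGpos t₀) hsep
    show 0 < -Real.log (G t₀)
    linarith
  have hapos : ∀ t, t₀ ≤ t → 0 < a t := by
    intro t ht
    exact lt_of_lt_of_le ha₀pos (hamono (Set.mem_Ici.2 ht₀) (Set.mem_Ici.2 (le_trans ht₀ ht)) ht)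
  have hGlt1 : ∀ t, t₀ ≤ t → G t < 1 := by
    intro t ht
    have h0 := hapos t ht
    have hlog : Real.log (G t) < 0 := by
      have : a t = -Real.log (G t) := rfl
      linarith
    exact (Real.log_neg_iff (hGpos t)).1 hlog
  have hqge : ∀ t, t₀ ≤ t → ∀ i, a t ≤ q i (v t) := by
    intro t ht i
    have h1 : Real.exp (-(q i (v t))) ≤ G t := by
      rw [hGdef]
      simp only [hLtil]
      exact Finset.single_le_sum (f := fun i => Real.exp (-(q i (v t))))
        (fun i _ => (Real.exp_pos _).le) (Finset.mem_univ i)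
    have h2 : -(q i (v t)) ≤ Real.log (G t) := (Real.le_log_iff_exp_le (hGpos t)).2 h1
    have : a t = -Real.log (G t) := rfl
    linarith
  have hPge : ∀ t, t₀ ≤ t → a t * G t ≤ P t := by
    intro t ht
    rw [hPdef, hGdef]
    simp only [hLtil, Finset.mul_sum]
    exact Finset.sum_le_sum fun i _ =>
      mul_le_mul_of_nonneg_right (hqge t ht i) (Real.exp_pos _).le
  have hPpos : ∀ t, t₀ ≤ t → 0 < P t := fun t ht =>
    lt_of_lt_of_le (mul_pos (hapos t ht) (hGpos t)) (hPge t ht)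
  have hRnonneg : ∀ t ∈ Set.Ici (0:ℝ), 0 ≤ R t := by
    intro t ht
    exact Finset.sum_nonneg fun j _ => div_nonneg (sq_nonneg _) (hβpos t ht j).le
  have hRpos : ∀ t, t₀ ≤ t → 0 < R t := by
    intro t ht
    have ht0 : t ∈ Set.Ici (0:ℝ) := Set.mem_Ici.2 (le_trans ht₀ ht)
    rcases lt_or_eq_of_le (hRnonneg t ht0) with h | h
    · exact h
    · exfalso
      have hz : ∀ j : Fin p, (v t j)^2 / β t j = 0 := by
        intro j
        have := (Finset.sum_eq_zero_iff_of_nonneg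
          (fun j _ => div_nonneg (sq_nonneg _) (hβpos t ht0 j).le)).1 h.symm
        exact this j (Finset.mem_univ j)
      have hv0 : v t = 0 := by
        ext j
        have := hz j
        have hβj := (hβpos t ht0 j).ne'
        field_simp at this
        simpa using this
      have hG1 : G t = (N : ℝ) := by
        rw [hGdef]
        simp only [hLtil, hv0]
        have : ∀ i : Fin N, q i 0 = 0 := fun i => hom_zero hL (q i) (hhom i)
        simp [this]
      have := hGlt1 t ht
      rw [hG1] at this
      have : (N:ℝ) < 1 := this
      have : N < 1 := by exact_mod_cast this
      omega
  -- Cauchy-Schwarz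
  have hCS : ∀ t ∈ Set.Ici (0:ℝ), (L * P t)^2 ≤ R t * Q t := by
    intro t ht
    have key := Finset.sum_mul_sq_le_sq_mul_sq Finset.univ
      (fun j => v t j / Real.sqrt (β t j)) (fun j => Real.sqrt (β t j) * g t j)
    have h1 : ∀ j : Fin p, v t j / Real.sqrt (β t j) * (Real.sqrt (β t j) * g t j)
        = v t j * g t j := by
      intro j
      have hs : Real.sqrt (β t j) ≠ 0 := (Real.sqrt_pos.2 (hβpos t ht j)).ne'
      field_simp
    have h2 : ∀ j : Fin p, (v t j / Real.sqrt (β t j))^2 = (v t j)^2 / β t j := by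
      intro j
      rw [div_pow, Real.sq_sqrt (hβpos t ht j).le]
    have h3 : ∀ j : Fin p, (Real.sqrt (β t j) * g t j)^2 = β t j * (g t j)^2 := by
      intro j
      rw [mul_pow, Real.sq_sqrt (hβpos t ht j).le]
    rw [Finset.sum_congr rfl (fun j _ => h1 j), Finset.sum_congr rfl (fun j _ => h2 j),
      Finset.sum_congr rfl (fun j _ => h3 j)] at key
    have h4 : ∑ j, v t j * g t j = -(L * P t) := by
      rw [← hclm t (v t), hEulerL t]
    rw [h4] at key
    calc (L * P t)^2 = (-(L * P t))^2 := by ring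
    _ ≤ (∑ j, (v t j)^2 / β t j) * (∑ j, β t j * (g t j)^2) := key
    _ = R t * Q t := rfl
  -- continuity and integrability of b
  have hβcont : ∀ j, ContinuousOn (fun t => β t j) (Set.Ici (0:ℝ)) :=
    fun j t ht => (hβderiv j t ht).continuousWithinAt
  have hbcont : ContinuousOn b (Set.Ici (0:ℝ)) := by
    rw [hbdef]
    apply continuousOn_finset_sum
    intro j _
    exact (((hβ'cont j).div (hβcont j) (fun t ht => (hβpos t ht j).ne')).abs)
  have hbnonneg : ∀ t, 0 ≤ b t := fun t =>
    Finset.sum_nonneg fun j _ => abs_nonneg _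
  have hbint : IntegrableOn b (Set.Ici (0:ℝ)) := by
    rw [hbdef]
    exact integrable_finset_sum _ (fun j _ => hβint j)
  -- |Dr| ≤ R * b
  have hDle : ∀ t ∈ Set.Ici (0:ℝ), |Dr t| ≤ R t * b t := by
    intro t ht
    rw [hDrdef]
    calc |∑ j, ((v t j)^2 / β t j) * (β' t j / β t j)|
        ≤ ∑ j, |((v t j)^2 / β t j) * (β' t j / β t j)| := Finset.abs_sum_le_sum_abs _ _
      _ ≤ ∑ j, R t * |β' t j / β t j| := by
          apply Finset.sum_le_sum
          intro j _
          rw [abs_mul, abs_of_nonneg (div_nonneg (sq_nonneg _) (hβpos t ht j).le)]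
          apply mul_le_mul_of_nonneg_right _ (abs_nonneg _)
          exact Finset.single_le_sum (f := fun j => (v t j)^2 / β t j)
            (fun j _ => div_nonneg (sq_nonneg _) (hβpos t ht j).le) (Finset.mem_univ j)
      _ = R t * b t := by rw [hbdef, Finset.mul_sum]
  -- derivative of R
  have hRd : ∀ t ∈ Set.Ici (0:ℝ),
      HasDerivWithinAt R (2 * L * P t - Dr t) (Set.Ici 0) t := by
    intro t ht
    have hterm : ∀ j : Fin p, HasDerivWithinAt (fun s => (v s j)^2 / β s j)
        (((2 * v t j ^ 1 * (-(β t j) * g t j)) * β t j - (v t j)^2 * β' t j) / (β t j)^2)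
        (Set.Ici 0) t := by
      intro j
      exact ((hflow j t ht).pow 2).div (hβderiv j t ht) (hβpos t ht j).ne'
    have hsum := HasDerivWithinAt.fun_sum (fun j (_ : j ∈ Finset.univ) => hterm j)
    have hval : ∑ j, ((2 * v t j ^ 1 * (-(β t j) * g t j)) * β t j - (v t j)^2 * β' t j)
        / (β t j)^2 = 2 * L * P t - Dr t := by
      have h1 : ∀ j : Fin p, ((2 * v t j ^ 1 * (-(β t j) * g t j)) * β t j
          - (v t j)^2 * β' t j) / (β t j)^2
          = (-2) * (v t j * g t j) - ((v t j)^2 / β t j) * (β' t j / β t j) := by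
        intro j
        have hβj := (hβpos t ht j).ne'
        field_simp
      rw [Finset.sum_congr rfl (fun j _ => h1 j), Finset.sum_sub_distrib, ← Finset.mul_sum]
      have h2 : ∑ j, v t j * g t j = -(L * P t) := by rw [← hclm t (v t), hEulerL t]
      have h3 : Dr t = ∑ j, ((v t j)^2 / β t j) * (β' t j / β t j) := rfl
      rw [h2, h3]
      ring
    rw [hval] at hsum
    exact hsum
  -- choose t₁
  have hbint' : IntegrableOn b (Set.Ioi t₀) :=
    hbint.mono_set (fun x hx => le_trans ht₀ (le_of_lt hx))
  set I := ∫ s in Set.Ioi t₀, b s with hIdef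
  have htendI : Tendsto (fun T => ∫ s in t₀..T, b s) atTop (nhds I) :=
    intervalIntegral_tendsto_integral_Ioi t₀ hbint' tendsto_id
  obtain ⟨t₁, ht₁ge, ht₁big⟩ : ∃ t₁, t₀ ≤ t₁ ∧ I - 1/L < ∫ s in t₀..t₁, b s := by
    have h1 : ∀ᶠ T in atTop, I - 1/L < ∫ s in t₀..T, b s :=
      htendI.eventually (eventually_gt_nhds (by
        have : 0 < 1/L := by positivity
        linarith))
    obtain ⟨T, h⟩ := ((eventually_ge_atTop t₀).and h1).exists
    exact ⟨T, h.1, h.2⟩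
  have hIIb : ∀ u w : ℝ, 0 ≤ u → 0 ≤ w → IntervalIntegrable b volume u w := by
    intro u w hu hw
    apply ContinuousOn.intervalIntegrable
    apply hbcont.mono
    intro x hx
    exact le_trans (le_inf hu hw) hx.1
  have hintEle : ∀ t, t₀ ≤ t → ∫ s in t₀..t, b s ≤ I := by
    intro t ht
    rw [intervalIntegral.integral_of_le ht]
    apply setIntegral_mono_set hbint'
    · exact Eventually.of_forall (fun x => hbnonneg x)
    · exact Eventually.of_forall (fun x hx => hx.1)
  have hBle : ∀ t, t₁ ≤ t → ∫ s in t₁..t, b s ≤ 1/L := by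
    intro t ht
    have hadd : (∫ s in t₀..t₁, b s) + ∫ s in t₁..t, b s = ∫ s in t₀..t, b s :=
      intervalIntegral.integral_add_adjacent_intervals
        (hIIb t₀ t₁ ht₀ (le_trans ht₀ ht₁ge))
        (hIIb t₁ t (le_trans ht₀ ht₁ge) (le_trans ht₀ (le_trans ht₁ge ht)))
    have := hintEle t (le_trans ht₁ge ht)
    linarith
  -- the potential function Φ
  set B : ℝ → ℝ := fun t => ∫ s in t₁..t, b s with hBdef
  set Φ : ℝ → ℝ := fun t => Real.log (a t) - L/2 * Real.log (R t) + L/2 * B t with hΦdef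
  have ht₁0 : (0:ℝ) ≤ t₁ := le_trans ht₀ ht₁ge
  have hsubset : Set.Ici t₁ ⊆ Set.Ici (0:ℝ) := fun x hx => le_trans ht₁0 hx
  have hBd : ∀ t ∈ Set.Ici t₁, HasDerivWithinAt B (b t) (Set.Ici t₁) t := by
    intro t ht
    rcases eq_or_lt_of_le (Set.mem_Ici.1 ht) with h | h
    · subst h
      apply intervalIntegral.integral_hasDerivWithinAt_right
        (hIIb t₁ t₁ ht₁0 ht₁0)
      · exact ⟨Set.Ici 0, mem_of_superset self_mem_nhdsWithin (fun x hx => le_trans ht₁0 hx.le),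
          hbcont.aestronglyMeasurable measurableSet_Ici⟩
      · exact (hbcont t₁ ht₁0).mono (fun x hx => le_trans ht₁0 hx.le)
    · have ht0 : 0 < t := lt_of_le_of_lt ht₁0 h
      have hca : ContinuousAt b t :=
        (hbcont t (le_of_lt ht0)).continuousAt (Ici_mem_nhds ht0)
      have := intervalIntegral.integral_hasDerivAt_right
        (hIIb t₁ t ht₁0 ht0.le)
        ⟨Set.Ici 0, Ici_mem_nhds ht0,
          hbcont.aestronglyMeasurable measurableSet_Ici⟩ hca
      exact this.hasDerivWithinAt
  have hΦd : ∀ t ∈ Set.Ici t₁, HasDerivWithinAt Φ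
      ((Q t / G t) / a t - L/2 * ((2 * L * P t - Dr t) / R t) + L/2 * b t)
      (Set.Ici t₁) t := by
    intro t ht
    have ht₀t : t₀ ≤ t := le_trans ht₁ge (Set.mem_Ici.1 ht)
    have h1 : HasDerivWithinAt (fun s => Real.log (a s)) ((Q t / G t) / a t) (Set.Ici t₁) t :=
      ((haD t (hsubset ht)).mono hsubset).log (hapos t ht₀t).ne'
    have h2 : HasDerivWithinAt (fun s => Real.log (R s)) ((2 * L * P t - Dr t) / R t)
        (Set.Ici t₁) t :=
      ((hRd t (hsubset ht)).mono hsubset).log (hRpos t ht₀t).ne'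
    exact (h1.sub (h2.const_mul (L/2))).add ((hBd t ht).const_mul (L/2))
  have hΦ'nonneg : ∀ t, t₁ < t →
      0 ≤ (Q t / G t) / a t - L/2 * ((2 * L * P t - Dr t) / R t) + L/2 * b t := by
    intro t ht
    have ht₀t : t₀ ≤ t := le_trans ht₁ge ht.le
    have ht0 : t ∈ Set.Ici (0:ℝ) := Set.mem_Ici.2 (le_trans ht₀ ht₀t)
    have hR := hRpos t ht₀t
    have hG := hGpos t
    have ha := hapos t ht₀t
    have hP := hPpos t ht₀t
    have hCS' := hCS t ht0
    have hPG := hPge t ht₀t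
    have hDr := hDle t ht0
    have hb := hbnonneg t
    have hQ := hQnonneg t ht0
    have h1 : (2 * L * P t - Dr t) / R t ≤ 2 * L * P t / R t + b t := by
      rw [div_le_iff₀ hR, add_mul, div_mul_cancel₀ _ hR.ne']
      have := neg_le_of_abs_le hDr
      nlinarith
    have h2 : L^2 * P t / R t ≤ (Q t / G t) / a t := by
      rw [div_div, div_le_div_iff₀ hR (mul_pos hG ha)]
      nlinarith
    have h3 : L/2 * ((2 * L * P t - Dr t) / R t) ≤ L/2 * (2 * L * P t / R t + b t) :=
      mul_le_mul_of_nonneg_left h1 (by positivity)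
    have h4 : L/2 * (2 * L * P t / R t) = L^2 * P t / R t := by ring
    nlinarith
  have hΦmono : MonotoneOn Φ (Set.Ici t₁) := by
    apply monotoneOn_of_hasDerivWithinAt_nonneg (convex_Ici t₁)
      (f' := fun t => (Q t / G t) / a t - L/2 * ((2 * L * P t - Dr t) / R t) + L/2 * b t)
      (fun t ht => (hΦd t ht).continuousWithinAt) ?_ ?_
    · rw [interior_Ici]
      exact fun t ht => ((hΦd t (Set.Ioi_subset_Ici_self ht)).mono Set.Ioi_subset_Ici_self)
    · rw [interior_Ici]
      exact fun t ht => hΦ'nonneg t ht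
  -- putting it together
  have hγeq : ∀ s, t₀ ≤ s → γ s = Real.exp (Real.log (a s) - L/2 * Real.log (R s)) := by
    intro s hs
    have hs0 : s ∈ Set.Ici (0:ℝ) := Set.mem_Ici.2 (le_trans ht₀ hs)
    have hRs := hRpos s hs
    have hsum : ∑ j, ((β s j) ^ (-(1/2) : ℝ) * v s j) ^ 2 = R s := by
      rw [hRdef]
      apply Finset.sum_congr rfl
      intro j _
      have hβj := hβpos s hs0 j
      rw [mul_pow]
      have : ((β s j) ^ (-(1/2) : ℝ))^2 = (β s j)⁻¹ := by
        rw [sq, ← Real.rpow_add hβj]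
        norm_num [Real.rpow_neg_one]
      rw [this]
      rw [inv_mul_eq_div]
    have hρs : ρ s = Real.sqrt (R s) := by rw [hρ s, hsum]
    have hρpos : 0 < ρ s := by rw [hρs]; exact Real.sqrt_pos.2 hRs
    have hpow : (ρ s) ^ L = Real.exp (L/2 * Real.log (R s)) := by
      rw [Real.rpow_def_of_pos hρpos, hρs, Real.log_sqrt (hRnonneg s hs0)]
      congr 1
      ring
    have hlog1 : Real.log (1 / Ltil (v s)) = a s := by
      rw [one_div, Real.log_inv, hadef, hGdef]
    rw [hγ s, hlog1, hpow, Real.exp_sub, Real.exp_log (hapos s hs)]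
  refine ⟨t₁, ht₁ge, fun t ht => ?_⟩
  have hmono := hΦmono (Set.mem_Ici.2 (le_refl t₁)) (Set.mem_Ici.2 ht) ht
  have hB0 : B t₁ = 0 := by rw [hBdef]; exact intervalIntegral.integral_same
  have hBt : L/2 * B t ≤ 1/2 := by
    have := hBle t ht
    have h2 : L/2 * B t ≤ L/2 * (1/L) := mul_le_mul_of_nonneg_left this (by positivity)
    have h3 : L/2 * (1/L) = 1/2 := by field_simp
    linarith
  have key : Real.log (a t₁) - L/2 * Real.log (R t₁) - 1/2
      ≤ Real.log (a t) - L/2 * Real.log (R t) := by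
    have e1 : Φ t₁ = Real.log (a t₁) - L/2 * Real.log (R t₁) + L/2 * B t₁ := rfl
    have e2 : Φ t = Real.log (a t) - L/2 * Real.log (R t) + L/2 * B t := rfl
    rw [e1, e2, hB0] at hmono
    linarith
  rw [hγeq t (le_trans ht₁ge ht), hγeq t₁ ht₁ge, ← Real.exp_add]
  exact Real.exp_le_exp.2 (by linarith)
end

section
/- Consider the adaptive gradient flow for the exponential-loss empirical risk with the separability assumption, and define the surrogate norm ρ(t) = ‖β(t)^{−1/2} ⊙ v(t)‖ and the surrogate margin γ̃(t) = log(1/L̃(v(t))) / ρ(t)^L. Then γ̃(t) converges to a strictly positive real limit as t → ∞. -/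
set_option maxHeartbeats 1000000

open MeasureTheory Filter

private theorem clm_expand {p : ℕ} (T : EuclideanSpace ℝ (Fin p) →L[ℝ] ℝ)
    (y : EuclideanSpace ℝ (Fin p)) :
    T y = ∑ j, y j * T (EuclideanSpace.single j 1) := by
  have hy : y = ∑ j, y j • EuclideanSpace.single j (1:ℝ) := by
    ext k
    rw [WithLp.ofLp_sum, Finset.sum_apply]
    simp [EuclideanSpace.single_apply]
  conv_lhs => rw [hy]
  rw [map_sum]
  simp [_root_.map_smul, smul_eq_mul]

private theorem curve_deriv {p : ℕ} (v : ℝ → EuclideanSpace ℝ (Fin p))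
    (w : EuclideanSpace ℝ (Fin p)) (s : Set ℝ) (t : ℝ)
    (h : ∀ j, HasDerivWithinAt (fun u => v u j) (w j) s t) :
    HasDerivWithinAt v w s t := by
  rw [hasDerivWithinAt_iff_hasFDerivWithinAt, hasFDerivWithinAt_piLp]
  intro i
  exact (h i).hasFDerivWithinAt

/-- Along an adaptive gradient flow for the exponential-loss empirical risk of
`L`-homogeneous `C¹` functions with the separability assumption, the surrogate margin
`γ̃(t) = log(1/L̃(v t)) / ρ(t)^L` (with `ρ(t) = ‖β(t)^{-1/2} ⊙ v(t)‖`) converges to a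
strictly positive limit as `t → ∞`. -/
theorem surrogate_margin_converges (p N : ℕ) (hp : 1 ≤ p) (hN : 1 ≤ N)
    (L : ℝ) (hL : 0 < L)
    (q : Fin N → EuclideanSpace ℝ (Fin p) → ℝ)
    (hq : ∀ i, ContDiff ℝ 1 (q i))
    (hhom : ∀ i, ∀ α : ℝ, 0 < α → ∀ v, q i (α • v) = α ^ L * q i v)
    (Ltil : EuclideanSpace ℝ (Fin p) → ℝ)
    (hLtil : ∀ x, Ltil x = ∑ i, Real.exp (-(q i x)))
    (v : ℝ → EuclideanSpace ℝ (Fin p))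
    (β β' : ℝ → Fin p → ℝ)
    (hβpos : ∀ t ∈ Set.Ici (0:ℝ), ∀ j, 0 < β t j)
    (hβderiv : ∀ j, ∀ t ∈ Set.Ici (0:ℝ),
      HasDerivWithinAt (fun s => β s j) (β' t j) (Set.Ici 0) t)
    (hβ'cont : ∀ j, ContinuousOn (fun t => β' t j) (Set.Ici 0))
    (hβlim : ∀ j, Tendsto (fun t => β t j) atTop (nhds 1))
    (hβint : ∀ j, IntegrableOn (fun t => |β' t j / β t j|) (Set.Ici 0))
    (hflow : ∀ j, ∀ t ∈ Set.Ici (0:ℝ),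
      HasDerivWithinAt (fun s => v s j)
        (-(β t j) * fderiv ℝ Ltil (v t) (EuclideanSpace.single j 1)) (Set.Ici 0) t)
    (t₀ : ℝ) (ht₀ : 0 ≤ t₀) (hsep : Ltil (v t₀) < 1)
    (ρ γ : ℝ → ℝ)
    (hρ : ∀ t, ρ t = Real.sqrt (∑ j, ((β t j) ^ (-(1/2) : ℝ) * v t j) ^ 2))
    (hγ : ∀ t, γ t = Real.log (1 / Ltil (v t)) / (ρ t) ^ L) :
    ∃ c : ℝ, 0 < c ∧ Tendsto γ atTop (nhds c) := by
  -- differentiability of the q i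
  have hqd : ∀ i x, HasFDerivAt (q i) (fderiv ℝ (q i) x) x := fun i x =>
    ((hq i).differentiable one_ne_zero x).hasFDerivAt
  -- total derivative of Ltil
  set Gd : EuclideanSpace ℝ (Fin p) → (EuclideanSpace ℝ (Fin p) →L[ℝ] ℝ) :=
    fun x => ∑ i, (-(Real.exp (-(q i x)))) • fderiv ℝ (q i) x with hGd
  have hG : ∀ x, HasFDerivAt Ltil (Gd x) x := by
    intro x
    have h : ∀ i : Fin N, HasFDerivAt (fun y => Real.exp (-(q i y)))
        ((-(Real.exp (-(q i x)))) • fderiv ℝ (q i) x) x := by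
      intro i
      have := ((hqd i x).neg).exp
      simpa [smul_smul, neg_smul] using this
    have := HasFDerivAt.sum (fun i (_ : i ∈ Finset.univ) => h i)
    exact this.congr_of_eventuallyEq (by filter_upwards with y; rw [hLtil, Finset.sum_apply])
  have hfd : ∀ x, fderiv ℝ Ltil x = Gd x := fun x => (hG x).fderiv
  -- Euler identity
  have hEuler : ∀ i x, fderiv ℝ (q i) x x = L * q i x := by
    intro i x
    have hc : HasDerivAt (fun α : ℝ => α • x) x 1 := by
      simpa using (hasDerivAt_id (1:ℝ)).smul_const x
    have h1 : HasDerivAt (fun α : ℝ => q i (α • x)) (fderiv ℝ (q i) x x) 1 := by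
      have := (show HasFDerivAt (q i) (fderiv ℝ (q i) x) ((1:ℝ) • x) by
        simpa using hqd i x).comp_hasDerivAt 1 hc
      exact this
    have h2 : HasDerivAt (fun α : ℝ => α ^ L * q i x) (L * q i x) 1 := by
      have := (Real.hasDerivAt_rpow_const (x := (1:ℝ)) (p := L)
        (Or.inl one_ne_zero)).mul_const (q i x)
      simpa using this
    have heq : (fun α : ℝ => q i (α • x)) =ᶠ[nhds 1] (fun α : ℝ => α ^ L * q i x) := by
      filter_upwards [eventually_gt_nhds (zero_lt_one)] with α hα
      exact hhom i α hα x
    exact (heq.hasDerivAt_iff.mp h1).unique h2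
  -- basic quantities
  set D : ℝ → Fin p → ℝ := fun t j => Gd (v t) (EuclideanSpace.single j 1) with hD
  set w : ℝ → EuclideanSpace ℝ (Fin p) := fun t => (WithLp.toLp 2 (fun j => -(β t j) * D t j) :
    EuclideanSpace ℝ (Fin p)) with hw
  have hflow' : ∀ j, ∀ t ∈ Set.Ici (0:ℝ),
      HasDerivWithinAt (fun s => v s j) (-(β t j) * D t j) (Set.Ici 0) t := by
    intro j t ht
    have := hflow j t ht
    rwa [hfd] at this
  have hv : ∀ t ∈ Set.Ici (0:ℝ), HasDerivWithinAt v (w t) (Set.Ici 0) t := by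
    intro t ht
    exact curve_deriv v (w t) _ t (fun j => hflow' j t ht)
  set φ : ℝ → ℝ := fun t => Ltil (v t) with hφ
  have hφpos : ∀ t, 0 < φ t := by
    intro t
    rw [hφ]
    simp only [hLtil]
    refine Finset.sum_pos (fun i _ => Real.exp_pos _) ?_
    exact ⟨⟨0, hN⟩, Finset.mem_univ _⟩
  set P : ℝ → ℝ := fun t => ∑ j, β t j * (D t j)^2 with hP
  have hφ' : ∀ t ∈ Set.Ici (0:ℝ), HasDerivWithinAt φ (-(P t)) (Set.Ici 0) t := by
    intro t ht
    have h1 : HasDerivWithinAt φ (Gd (v t) (w t)) (Set.Ici 0) t :=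
      (hG (v t)).comp_hasDerivWithinAt t (hv t ht)
    have h2 : Gd (v t) (w t) = -(P t) := by
      rw [clm_expand (Gd (v t)) (w t), hP]
      rw [← Finset.sum_neg_distrib]
      refine Finset.sum_congr rfl (fun j _ => ?_)
      show (-(β t j) * D t j) * D t j = -(β t j * (D t j)^2)
      ring
    rwa [h2] at h1
  set a : ℝ → ℝ := fun t => -Real.log (φ t) with ha
  have ha' : ∀ t ∈ Set.Ici (0:ℝ), HasDerivWithinAt a (P t / φ t) (Set.Ici 0) t := by
    intro t ht
    have := ((hφ' t ht).log (hφpos t).ne').neg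
    simp only [neg_div, neg_neg] at this
    exact this
  -- φ is antitone on [t₀, ∞), hence stays < 1 and a > 0
  have hPnonneg : ∀ t ∈ Set.Ici (0:ℝ), 0 ≤ P t := by
    intro t ht
    exact Finset.sum_nonneg (fun j _ => mul_nonneg (hβpos t ht j).le (sq_nonneg _))
  have hIciIci : Set.Ici t₀ ⊆ Set.Ici (0:ℝ) := Set.Ici_subset_Ici.2 ht₀
  have hφanti : AntitoneOn φ (Set.Ici t₀) := by
    refine antitoneOn_of_deriv_nonpos (convex_Ici t₀)
      (fun t ht => ((hφ' t (hIciIci ht)).continuousWithinAt).mono hIciIci) ?_ ?_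
    · intro t ht
      rw [interior_Ici] at ht
      have ht0 : (0:ℝ) < t := lt_of_le_of_lt ht₀ ht
      exact ((hφ' t ht0.le).hasDerivAt (Ici_mem_nhds ht0)).differentiableAt.differentiableWithinAt
    · intro t ht
      rw [interior_Ici] at ht
      have ht0 : (0:ℝ) < t := lt_of_le_of_lt ht₀ ht
      rw [((hφ' t ht0.le).hasDerivAt (Ici_mem_nhds ht0)).deriv]
      exact neg_nonpos.2 (hPnonneg t ht0.le)
  have hφlt1 : ∀ t ∈ Set.Ici t₀, φ t < 1 := fun t ht =>
    lt_of_le_of_lt (hφanti (Set.self_mem_Ici) ht ht) hsep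
  have hapos : ∀ t ∈ Set.Ici t₀, 0 < a t := by
    intro t ht
    rw [ha]
    simp only [neg_pos]
    exact Real.log_neg (hφpos t) (hφlt1 t ht)
  -- a(t) is a lower bound for each q i (v t)
  have haq : ∀ t, ∀ i, a t ≤ q i (v t) := by
    intro t i
    have h1 : Real.exp (-(q i (v t))) ≤ φ t := by
      rw [hφ]
      simp only [hLtil]
      exact Finset.single_le_sum (f := fun i' => Real.exp (-(q i' (v t))))
        (fun i' _ => (Real.exp_pos _).le) (Finset.mem_univ i)
    have h2 : -(q i (v t)) ≤ Real.log (φ t) := by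
      have := Real.log_le_log (Real.exp_pos _) h1
      rwa [Real.log_exp] at this
    have he : a t = -Real.log (φ t) := rfl
    rw [he]; linarith
  -- v t ≠ 0 for t ≥ t₀
  have hq0 : ∀ i, q i (0 : EuclideanSpace ℝ (Fin p)) = 0 := by
    intro i
    have h := hhom i 2 (by norm_num) 0
    rw [smul_zero] at h
    have h2 : (1:ℝ) < (2:ℝ) ^ L := Real.one_lt_rpow_iff_of_pos (by norm_num) |>.2
      (Or.inl ⟨by norm_num, hL⟩)
    nlinarith [h2]
  have hvne : ∀ t ∈ Set.Ici t₀, v t ≠ 0 := by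
    intro t ht hv0
    have := haq t ⟨0, hN⟩
    rw [hv0, hq0] at this
    exact absurd (hapos t ht) (by linarith)
  -- Euler: value of -Gd (v t) (v t)
  set U : ℝ → ℝ := fun t => ∑ i, q i (v t) * Real.exp (-(q i (v t))) with hUdef
  set Q : ℝ → ℝ := fun t => ∑ j, v t j * D t j with hQdef
  have hQU : ∀ t, Q t = -(L * U t) := by
    intro t
    have h1 : Q t = Gd (v t) (v t) := (clm_expand (Gd (v t)) (v t)).symm
    rw [h1, hGd]
    rw [ContinuousLinearMap.sum_apply]
    simp only [ContinuousLinearMap.coe_smul', Pi.smul_apply, smul_eq_mul]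
    rw [hUdef, Finset.mul_sum, ← Finset.sum_neg_distrib]
    refine Finset.sum_congr rfl (fun i _ => ?_)
    rw [hEuler i (v t)]
    ring
  have hUlb : ∀ t ∈ Set.Ici t₀, a t * φ t ≤ U t := by
    intro t ht
    have h1 : a t * φ t = ∑ i, a t * Real.exp (-(q i (v t))) := by
      rw [hφ]; simp only [hLtil]; rw [Finset.mul_sum]
    rw [h1, hUdef]
    exact Finset.sum_le_sum (fun i _ =>
      mul_le_mul_of_nonneg_right (haq t i) (Real.exp_pos _).le)
  -- r and its derivative
  set r : ℝ → ℝ := fun t => ∑ j, (v t j)^2 / β t j with hr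
  have hrpos : ∀ t ∈ Set.Ici t₀, 0 < r t := by
    intro t ht
    obtain ⟨j, hj⟩ : ∃ j, v t j ≠ 0 := by
      by_contra h
      push_neg at h
      exact hvne t ht (by ext j; exact h j)
    refine Finset.sum_pos' (fun j' _ => div_nonneg (sq_nonneg _) (hβpos t (hIciIci ht) j').le)
      ⟨j, Finset.mem_univ j, ?_⟩
    exact div_pos (by positivity) (hβpos t (hIciIci ht) j)
  set S : ℝ → ℝ := fun t => ∑ j, (v t j)^2 * β' t j / (β t j)^2 with hS
  set E : ℝ → ℝ := fun t => ∑ j, |β' t j / β t j| with hE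
  have hr' : ∀ t ∈ Set.Ici (0:ℝ),
      HasDerivWithinAt r (-2 * Q t - S t) (Set.Ici 0) t := by
    intro t ht
    have hterm : ∀ j : Fin p, HasDerivWithinAt (fun s => (v s j)^2 / β s j)
        ((2 * v t j * (-(β t j) * D t j) * β t j - (v t j)^2 * β' t j) / (β t j)^2)
        (Set.Ici 0) t := by
      intro j
      have h1 : HasDerivWithinAt (fun s => (v s j)^2)
          (2 * v t j * (-(β t j) * D t j)) (Set.Ici 0) t := by
        have := (hflow' j t ht).fun_pow 2
        simpa [mul_comm, mul_assoc, mul_left_comm] using this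
      exact h1.div (hβderiv j t ht) (hβpos t ht j).ne'
    have hsum := HasDerivWithinAt.fun_sum (u := Finset.univ)
      (fun j (_ : j ∈ Finset.univ) => hterm j)
    have heq : ∑ j, (2 * v t j * (-(β t j) * D t j) * β t j - (v t j)^2 * β' t j) / (β t j)^2
        = -2 * Q t - S t := by
      rw [hQdef, hS, Finset.mul_sum, ← Finset.sum_sub_distrib]
      refine Finset.sum_congr rfl (fun j _ => ?_)
      have hβj := (hβpos t ht j).ne'
      field_simp
    rw [heq] at hsum
    exact hsum
  have hSbound : ∀ t ∈ Set.Ici (0:ℝ), |S t| ≤ E t * r t := by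
    intro t ht
    rw [hS]
    refine (Finset.abs_sum_le_sum_abs _ _).trans ?_
    have h1 : ∀ j : Fin p, |(v t j)^2 * β' t j / (β t j)^2|
        ≤ E t * ((v t j)^2 / β t j) := by
      intro j
      have hβj := hβpos t ht j
      have h2 : |(v t j)^2 * β' t j / (β t j)^2|
          = |β' t j / β t j| * ((v t j)^2 / β t j) := by
        rw [abs_div, abs_mul, abs_div]
        rw [abs_of_nonneg (sq_nonneg (v t j)), abs_of_nonneg (sq_nonneg (β t j)),
          abs_of_pos hβj]
        field_simp
      rw [h2]
      refine mul_le_mul_of_nonneg_right ?_ (div_nonneg (sq_nonneg _) hβj.le)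
      exact Finset.single_le_sum (f := fun j' => |β' t j' / β t j'|)
        (fun j' _ => abs_nonneg _) (Finset.mem_univ j)
    refine (Finset.sum_le_sum (fun j _ => h1 j)).trans ?_
    rw [hr, Finset.mul_sum]
  have hEnonneg : ∀ t, 0 ≤ E t := fun t => Finset.sum_nonneg (fun j _ => abs_nonneg _)
  -- Cauchy-Schwarz
  have hCS : ∀ t ∈ Set.Ici (0:ℝ), (Q t)^2 ≤ r t * P t := by
    intro t ht
    have h := Finset.sum_mul_sq_le_sq_mul_sq Finset.univ
      (fun j => v t j / Real.sqrt (β t j)) (fun j => Real.sqrt (β t j) * D t j)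
    have h1 : ∀ j : Fin p, v t j / Real.sqrt (β t j) * (Real.sqrt (β t j) * D t j)
        = v t j * D t j := by
      intro j
      have : Real.sqrt (β t j) ≠ 0 := (Real.sqrt_pos.2 (hβpos t ht j)).ne'
      field_simp
    have h2 : ∀ j : Fin p, (v t j / Real.sqrt (β t j))^2 = (v t j)^2 / β t j := by
      intro j
      rw [div_pow, Real.sq_sqrt (hβpos t ht j).le]
    have h3 : ∀ j : Fin p, (Real.sqrt (β t j) * D t j)^2 = β t j * (D t j)^2 := by
      intro j
      rw [mul_pow, Real.sq_sqrt (hβpos t ht j).le]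
    rw [Finset.sum_congr rfl (fun j _ => h1 j), Finset.sum_congr rfl (fun j _ => h2 j),
      Finset.sum_congr rfl (fun j _ => h3 j)] at h
    exact h
  -- the log-margin g
  set g : ℝ → ℝ := fun t => Real.log (a t) - L/2 * Real.log (r t) with hg
  have hg' : ∀ t ∈ Set.Ici t₀, HasDerivWithinAt g
      (P t / φ t / a t - L/2 * ((-2 * Q t - S t) / r t)) (Set.Ici 0) t := by
    intro t ht
    have h1 := (ha' t (hIciIci ht)).log (hapos t ht).ne'
    have h2 := ((hr' t (hIciIci ht)).log (hrpos t ht).ne').const_mul (L/2)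
    exact h1.sub h2
  -- the key inequality
  have hkey : ∀ t ∈ Set.Ici t₀,
      -(L/2 * E t) ≤ P t / φ t / a t - L/2 * ((-2 * Q t - S t) / r t) := by
    intro t ht
    have hφt := hφpos t
    have hat := hapos t ht
    have hrt := hrpos t ht
    set K := -(Q t) with hK
    have hKlb : L * (a t * φ t) ≤ K := by
      rw [hK, hQU t, neg_neg]
      exact mul_le_mul_of_nonneg_left (hUlb t ht) hL.le
    have hK0 : 0 ≤ K := le_trans (by positivity) hKlb
    have hcs : K^2 ≤ r t * P t := by rw [hK, neg_pow]; simpa using hCS t (hIciIci ht)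
    have h1 : L * K / r t ≤ P t / (φ t * a t) := by
      rw [div_le_div_iff₀ hrt (by positivity)]
      have e1 : L * K * (φ t * a t) = K * (L * (a t * φ t)) := by ring
      rw [e1]
      calc K * (L * (a t * φ t)) ≤ K * K := mul_le_mul_of_nonneg_left hKlb hK0
        _ = K ^ 2 := (sq K).symm
        _ ≤ r t * P t := hcs
        _ = P t * r t := mul_comm _ _
    have h2 : (-2 * Q t - S t) / r t ≤ 2 * K / r t + E t := by
      have hs : -2 * Q t - S t ≤ 2 * K + E t * r t := by
        have := (abs_le.1 (hSbound t (hIciIci ht))).1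
        rw [hK]; linarith
      calc (-2 * Q t - S t) / r t ≤ (2 * K + E t * r t) / r t := by gcongr
        _ = 2 * K / r t + E t := by field_simp
    have h3 : P t / φ t / a t = P t / (φ t * a t) := by rw [div_div]
    rw [h3]
    have h4 := mul_le_mul_of_nonneg_left h2 (by positivity : (0:ℝ) ≤ L/2)
    have e2 : L/2 * (2 * K / r t + E t) = L * K / r t + L/2 * E t := by ring
    linarith
  
  -- continuity and integrability of E
  have hβcont : ∀ j, ContinuousOn (fun t => β t j) (Set.Ici 0) :=
    fun j t ht => (hβderiv j t ht).continuousWithinAt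
  have hEcont : ContinuousOn E (Set.Ici 0) := by
    rw [hE]
    refine continuousOn_finset_sum _ (fun j _ => ContinuousOn.abs ?_)
    exact (hβ'cont j).div (hβcont j) (fun t ht => (hβpos t ht j).ne')
  have hEint : IntegrableOn E (Set.Ici 0) := by
    rw [hE]
    exact integrable_finset_sum _ (fun j _ => hβint j)
  -- interval integrability of E
  have hEII : ∀ x ∈ Set.Ici (0:ℝ), ∀ y ∈ Set.Ici (0:ℝ), IntervalIntegrable E volume x y := by
    intro x hx y hy
    refine ContinuousOn.intervalIntegrable (hEcont.mono ?_)
    intro u hu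
    rcases Set.mem_uIcc.1 hu with ⟨h,_⟩|⟨h,_⟩
    exacts [le_trans hx h, le_trans hy h]
  set I : ℝ → ℝ := fun t => ∫ s in t₀..t, E s with hI
  have hI' : ∀ t, t₀ < t → HasDerivAt I (E t) t := by
    intro t ht
    have ht0 : (0:ℝ) < t := lt_of_le_of_lt ht₀ ht
    refine intervalIntegral.integral_hasDerivAt_right (hEII t₀ ht₀ t ht0.le) ?_ ?_
    · exact ContinuousOn.stronglyMeasurableAtFilter isOpen_Ioi
        (hEcont.mono (Set.Ioi_subset_Ici le_rfl)) t ht0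
    · exact (hEcont t ht0.le).continuousAt (Ici_mem_nhds ht0)
  have hImono : MonotoneOn I (Set.Ici t₀) := by
    intro x hx y hy hxy
    have h1 : I x + ∫ s in x..y, E s = I y :=
      intervalIntegral.integral_add_adjacent_intervals
        (hEII t₀ ht₀ x (le_trans ht₀ hx)) (hEII x (le_trans ht₀ hx) y (le_trans ht₀ hy))
    have h2 : 0 ≤ ∫ s in x..y, E s :=
      intervalIntegral.integral_nonneg hxy (fun u _ => hEnonneg u)
    linarith
  set CI : ℝ := ∫ s in Set.Ici (0:ℝ), E s with hCI
  have hIbdd : ∀ t ∈ Set.Ici t₀, I t ≤ CI := by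
    intro t ht
    rw [hI]
    simp only
    rw [intervalIntegral.integral_of_le ht]
    refine setIntegral_mono_set hEint ?_ ?_
    · exact Filter.Eventually.of_forall hEnonneg
    · refine HasSubset.Subset.eventuallyLE ?_
      intro u hu
      exact le_trans ht₀ hu.1.le
  -- F = g + (L/2) I is monotone on [t₀, ∞)
  set F : ℝ → ℝ := fun t => g t + L/2 * I t with hF
  have hgcont : ContinuousOn g (Set.Ici t₀) :=
    fun t ht => ((hg' t ht).continuousWithinAt).mono hIciIci
  have hIcont : ContinuousOn I (Set.Ici t₀) := by
    intro t ht
    have hint : IntervalIntegrable E volume (min t₀ t₀) (max t₀ (t+1)) := by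
      rw [min_self]
      exact hEII t₀ ht₀ (max t₀ (t+1)) (le_trans ht₀ (le_max_left _ _))
    have h1 : ContinuousWithinAt I (Set.Icc t₀ (t+1)) t :=
      intervalIntegral.continuousWithinAt_primitive (measure_singleton t) hint
    refine h1.mono_of_mem_nhdsWithin ?_
    rw [← Set.Ici_inter_Iic]
    exact Filter.inter_mem self_mem_nhdsWithin
      (mem_nhdsWithin_of_mem_nhds (Iic_mem_nhds (by linarith)))
  have hFd : ∀ t, t₀ < t → HasDerivAt F
      (P t / φ t / a t - L/2 * ((-2 * Q t - S t) / r t) + L/2 * E t) t := by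
    intro t ht
    have ht0 : (0:ℝ) < t := lt_of_le_of_lt ht₀ ht
    have h1 : HasDerivAt g (P t / φ t / a t - L/2 * ((-2 * Q t - S t) / r t)) t :=
      (hg' t ht.le).hasDerivAt (Ici_mem_nhds ht0)
    exact h1.add ((hI' t ht).const_mul (L/2))
  have hFmono : MonotoneOn F (Set.Ici t₀) := by
    refine monotoneOn_of_deriv_nonneg (convex_Ici t₀)
      (hgcont.add (hIcont.const_smul (L/2))) ?_ ?_
    · intro t ht
      rw [interior_Ici] at ht
      exact (hFd t ht).differentiableAt.differentiableWithinAt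
    · intro t ht
      rw [interior_Ici] at ht
      rw [(hFd t ht).deriv]
      have := hkey t (Set.Ioi_subset_Ici_self ht)
      linarith
  -- tail bound on g
  obtain ⟨t₂', ht₂'⟩ : ∃ t₂', ∀ t ≥ t₂', ∀ j, β t j ≤ 2 := by
    have h : ∀ᶠ t in atTop, ∀ j : Fin p, β t j ≤ 2 := by
      rw [eventually_all]
      intro j
      have := (hβlim j).eventually (eventually_le_nhds (by norm_num : (1:ℝ) < 2))
      exact this
    exact eventually_atTop.1 h
  set T : ℝ := max t₀ t₂' with hT
  have hTt₀ : t₀ ≤ T := le_max_left _ _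
  -- bound on the sphere
  have hnt : Nontrivial (EuclideanSpace ℝ (Fin p)) := by
    refine ⟨EuclideanSpace.single ⟨0, hp⟩ 1, 0, ?_⟩
    intro h
    have := congrArg (fun z => z ⟨0, hp⟩) h
    simpa using this
  obtain ⟨z, hz, hzmax⟩ := (isCompact_sphere (0 : EuclideanSpace ℝ (Fin p)) 1).exists_isMaxOn
    (NormedSpace.sphere_nonempty.mpr zero_le_one)
    ((hq ⟨0, hN⟩).continuous.continuousOn)
  set M : ℝ := max (q ⟨0, hN⟩ z) 1 with hM
  have hM1 : (1:ℝ) ≤ M := le_max_right _ _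
  have hM0 : (0:ℝ) < M := lt_of_lt_of_le one_pos hM1
  have hgbdd : ∀ t ∈ Set.Ici T, g t ≤ Real.log M + L/2 * Real.log 2 := by
    intro t ht
    have htt₀ : t ∈ Set.Ici t₀ := le_trans hTt₀ ht
    have hvt := hvne t htt₀
    set n : ℝ := ‖v t‖ with hn
    have hnpos : 0 < n := norm_pos_iff.mpr hvt
    -- a t ≤ M * n ^ L
    have haM : a t ≤ M * n ^ L := by
      have hu : (n⁻¹ • v t) ∈ Metric.sphere (0 : EuclideanSpace ℝ (Fin p)) 1 := by
        simp [norm_smul, abs_of_pos (inv_pos.2 hnpos), hn, inv_mul_cancel₀ hnpos.ne', inv_mul_cancel₀ (norm_ne_zero_iff.mpr hvt)]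
      have h1 : q ⟨0, hN⟩ (v t) = n ^ L * q ⟨0, hN⟩ (n⁻¹ • v t) := by
        have := hhom ⟨0, hN⟩ n hnpos (n⁻¹ • v t)
        rw [smul_smul, mul_inv_cancel₀ hnpos.ne', one_smul] at this
        exact this
      have h2 : q ⟨0, hN⟩ (n⁻¹ • v t) ≤ M := le_trans (hzmax hu) (le_max_left _ _)
      calc a t ≤ q ⟨0, hN⟩ (v t) := haq t _
        _ = n ^ L * q ⟨0, hN⟩ (n⁻¹ • v t) := h1
        _ ≤ n ^ L * M := mul_le_mul_of_nonneg_left h2 (Real.rpow_nonneg hnpos.le _)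
        _ = M * n ^ L := mul_comm _ _
    -- r t ≥ n^2 / 2
    have hrn : n^2 / 2 ≤ r t := by
      have hsum : ∑ j, (v t j)^2 = n^2 := by
        rw [hn, EuclideanSpace.norm_eq]
        rw [Real.sq_sqrt (Finset.sum_nonneg (fun j _ => sq_nonneg _))]
        congr 1
        ext j
        rw [Real.norm_eq_abs, sq_abs]
      rw [hr]
      simp only
      rw [← hsum, Finset.sum_div]
      refine Finset.sum_le_sum (fun j _ => ?_)
      exact div_le_div_of_nonneg_left (sq_nonneg _) (hβpos t (hIciIci htt₀) j)
        (ht₂' t (le_trans (le_max_right _ _) ht) j)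
    -- combine
    have hat := hapos t htt₀
    have hrt := hrpos t htt₀
    have h3 : Real.log (a t) ≤ Real.log M + L * Real.log n := by
      calc Real.log (a t) ≤ Real.log (M * n ^ L) := Real.log_le_log hat haM
        _ = Real.log M + Real.log (n ^ L) := Real.log_mul hM0.ne' (by positivity)
        _ = Real.log M + L * Real.log n := by rw [Real.log_rpow hnpos]
    have h4 : 2 * Real.log n - Real.log 2 ≤ Real.log (r t) := by
      have := Real.log_le_log (by positivity : (0:ℝ) < n^2/2) hrn
      rwa [Real.log_div (by positivity) (by norm_num), Real.log_pow] at this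
    have h5 := mul_le_mul_of_nonneg_left h4 (by positivity : (0:ℝ) ≤ L/2)
    rw [hg]
    simp only
    nlinarith [h5]
  -- monotone convergence of F and I
  have hFb : ∀ t ∈ Set.Ici T, F t ≤ (Real.log M + L/2 * Real.log 2) + L/2 * CI := by
    intro t ht
    have htt₀ : t ∈ Set.Ici t₀ := le_trans hTt₀ ht
    have h1 := hgbdd t ht
    have h2 := mul_le_mul_of_nonneg_left (hIbdd t htt₀) (by positivity : (0:ℝ) ≤ L/2)
    rw [hF]
    simp only
    linarith
  have hFT : Monotone (fun s => F (max s T)) := by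
    intro x y hxy
    exact hFmono (le_trans hTt₀ (le_max_right _ _)) (le_trans hTt₀ (le_max_right _ _))
      (max_le_max hxy le_rfl)
  have hFTb : BddAbove (Set.range (fun s => F (max s T))) := by
    refine ⟨(Real.log M + L/2 * Real.log 2) + L/2 * CI, ?_⟩
    rintro _ ⟨s, rfl⟩
    exact hFb (max s T) (le_max_right s T)
  have hFtends : Tendsto F atTop (nhds (⨆ s, F (max s T))) := by
    refine Tendsto.congr' ?_ (tendsto_atTop_ciSup hFT hFTb)
    filter_upwards [eventually_ge_atTop T] with s hs
    rw [max_eq_left hs]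
  have hIT : Monotone (fun s => I (max s T)) := by
    intro x y hxy
    exact hImono (le_trans hTt₀ (le_max_right _ _)) (le_trans hTt₀ (le_max_right _ _))
      (max_le_max hxy le_rfl)
  have hITb : BddAbove (Set.range (fun s => I (max s T))) := by
    refine ⟨CI, ?_⟩
    rintro _ ⟨s, rfl⟩
    exact hIbdd _ (le_trans hTt₀ (le_max_right _ _))
  have hItends : Tendsto I atTop (nhds (⨆ s, I (max s T))) := by
    refine Tendsto.congr' ?_ (tendsto_atTop_ciSup hIT hITb)
    filter_upwards [eventually_ge_atTop T] with s hs
    rw [max_eq_left hs]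
  -- g converges
  have hgtends : Tendsto g atTop
      (nhds ((⨆ s, F (max s T)) - L/2 * (⨆ s, I (max s T)))) := by
    have : g = fun t => F t - L/2 * I t := by
      funext t
      rw [hF]
      ring
    rw [this]
    exact hFtends.sub ((hItends.const_mul (L/2)))
  -- γ = exp ∘ g eventually
  have hγg : ∀ t ∈ Set.Ici t₀, γ t = Real.exp (g t) := by
    intro t ht
    have hat := hapos t ht
    have hrt := hrpos t ht
    have hρr : ρ t = Real.sqrt (r t) := by
      rw [hρ, hr]
      congr 1
      refine Finset.sum_congr rfl (fun j _ => ?_)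
      have hβj := hβpos t (hIciIci ht) j
      rw [mul_pow, ← Real.rpow_natCast (β t j ^ (-(1/2):ℝ)) 2, ← Real.rpow_mul hβj.le]
      norm_num
      rw [Real.rpow_neg_one]
      field_simp
    have hρL : (ρ t) ^ L = Real.exp (L/2 * Real.log (r t)) := by
      rw [hρr, Real.sqrt_eq_rpow, ← Real.rpow_mul hrt.le]
      rw [Real.rpow_def_of_pos hrt]
      ring_nf
    have hlog1 : Real.log (1 / φ t) = a t := by
      rw [one_div, Real.log_inv, ha]
    rw [hγ, hρL]
    have : Real.log (1 / Ltil (v t)) = a t := hlog1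
    rw [this, hg]
    simp only
    rw [Real.exp_sub, Real.exp_log hat]
  refine ⟨Real.exp ((⨆ s, F (max s T)) - L/2 * (⨆ s, I (max s T))), Real.exp_pos _, ?_⟩
  have hexp : Tendsto (fun t => Real.exp (g t)) atTop
      (nhds (Real.exp ((⨆ s, F (max s T)) - L/2 * (⨆ s, I (max s T))))) :=
    (Real.continuous_exp.continuousAt.tendsto).comp hgtends
  refine Tendsto.congr' ?_ hexp
  filter_upwards [eventually_ge_atTop t₀] with t ht
  exact (hγg t ht).symm
end

section
/- Let L : ℝ^p → ℝ be nonnegative and differentiable with M-Lipschitz gradient for some M > 0. Fix ε > 0 and η̃ > 0, and let the AdaGrad iterates w : ℕ → ℝ^p satisfy w(t+1) = w(t) − η_t (h(t) ⊙ ∇L(w(t))), where h_j(t) = (ε + Σ_{τ=0}^{t} (∂_j L(w(τ)))²)^{−1/2} and the step sizes satisfy η̃ ≤ η_t and η_t · M · h_j(t) ≤ 1 for every j and every t. Then Σ_{t=0}^{∞} ‖∇L(w(t))‖² < ∞; in particular, for every coordinate j the conditioner h_j(t) converges as t → ∞ to a strictly positive limit. -/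
open Filter

private theorem adagrad_descent {F : Type*} [NormedAddCommGroup F] [InnerProductSpace ℝ F]
    [CompleteSpace F]
    (L : F → ℝ) (M : ℝ) (hM : 0 < M) (hdiff : Differentiable ℝ L)
    (hlip : ∀ x y, ‖gradient L x - gradient L y‖ ≤ M * ‖x - y‖)
    (x d : F) :
    L (x + d) ≤ L x + inner ℝ (gradient L x) d + M / 2 * ‖d‖ ^ 2 := by
  set φ : ℝ → ℝ := fun s => L (x + s • d) with hφ
  set ψ : ℝ → ℝ := fun s => inner ℝ (gradient L (x + s • d)) d with hψ
  have hderiv : ∀ s : ℝ, HasDerivAt φ (ψ s) s := by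
    intro s
    have h1 : HasDerivAt (fun s : ℝ => x + s • d) d s := by
      simpa using ((hasDerivAt_id s).smul_const d).const_add x
    have h2 := ((hdiff (x + s • d)).hasGradientAt.hasFDerivAt).comp_hasDerivAt s h1
    exact h2
  have hgcont : Continuous (gradient L) := by
    rw [Metric.continuous_iff]
    intro b δ hδ
    refine ⟨δ / M, by positivity, fun a ha => ?_⟩
    rw [dist_eq_norm]
    calc ‖gradient L a - gradient L b‖ ≤ M * ‖a - b‖ := hlip a b
    _ < M * (δ / M) := by
        refine mul_lt_mul_of_pos_left ?_ hM
        rw [← dist_eq_norm]; exact ha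
    _ = δ := by field_simp
  have hψcont : Continuous ψ := by
    apply Continuous.inner
    · exact hgcont.comp (by continuity)
    · exact continuous_const
  have hFTC : ∫ s in (0:ℝ)..1, ψ s = φ 1 - φ 0 :=
    intervalIntegral.integral_eq_sub_of_hasDerivAt (fun s _ => hderiv s)
      (hψcont.intervalIntegrable 0 1)
  have hbound : ∀ s ∈ Set.Icc (0:ℝ) 1, ψ s ≤ ψ 0 + M * ‖d‖ ^ 2 * s := by
    intro s hs
    have hkey : ψ s - ψ 0 = inner ℝ (gradient L (x + s • d) - gradient L x) d := by
      simp [hψ, inner_sub_left]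
    have hle : ψ s - ψ 0 ≤ M * ‖d‖ ^ 2 * s := by
      rw [hkey]
      calc inner ℝ (gradient L (x + s • d) - gradient L x) d
          ≤ ‖gradient L (x + s • d) - gradient L x‖ * ‖d‖ := real_inner_le_norm _ _
        _ ≤ (M * ‖x + s • d - x‖) * ‖d‖ :=
            mul_le_mul_of_nonneg_right (hlip _ _) (norm_nonneg d)
        _ = M * ‖d‖ ^ 2 * s := by
            simp only [add_sub_cancel_left, norm_smul, Real.norm_eq_abs,
              abs_of_nonneg hs.1]
            ring
    linarith
  have hint : ∫ s in (0:ℝ)..1, ψ s ≤ ∫ s in (0:ℝ)..1, (ψ 0 + M * ‖d‖ ^ 2 * s) := by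
    apply intervalIntegral.integral_mono_on zero_le_one (hψcont.intervalIntegrable 0 1)
      (by apply Continuous.intervalIntegrable; continuity) hbound
  have hval : ∫ s in (0:ℝ)..1, (ψ 0 + M * ‖d‖ ^ 2 * s) = ψ 0 + M / 2 * ‖d‖ ^ 2 := by
    rw [intervalIntegral.integral_add intervalIntegrable_const
        (by apply Continuous.intervalIntegrable; continuity),
      intervalIntegral.integral_const_mul, integral_id, intervalIntegral.integral_const]
    norm_num
    ring
  have hψ0 : ψ 0 = inner ℝ (gradient L x) d := by simp [hψ]
  have hφ1 : φ 1 = L (x + d) := by simp [hφ]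
  have hφ0 : φ 0 = L x := by simp [hφ]
  nlinarith [hFTC, hint, hval]

private theorem sqrt_diff_le {A B : ℝ} (hB : 0 < B) (hAB : B ≤ A) :
    Real.sqrt A - Real.sqrt B ≤ (A - B) / Real.sqrt A := by
  have hA : 0 < A := lt_of_lt_of_le hB hAB
  have sa := Real.sq_sqrt hA.le
  have sb := Real.sq_sqrt hB.le
  have pa := Real.sqrt_pos.2 hA
  have pb := Real.sqrt_pos.2 hB
  rw [← sub_nonneg]
  have key : (A - B) / Real.sqrt A - (Real.sqrt A - Real.sqrt B)
      = Real.sqrt B * (Real.sqrt A - Real.sqrt B) / Real.sqrt A := by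
    field_simp
    nlinarith [sa, sb]
  rw [key]
  have hba : Real.sqrt B ≤ Real.sqrt A := Real.sqrt_le_sqrt hAB
  exact div_nonneg (mul_nonneg pb.le (sub_nonneg.2 hba)) pa.le

private theorem euclid_norm_sq (p : ℕ) (x : EuclideanSpace ℝ (Fin p)) :
    ‖x‖ ^ 2 = ∑ j, x j ^ 2 := by
  rw [EuclideanSpace.norm_eq, Real.sq_sqrt (by positivity)]
  simp [sq_abs]

/-- For the discrete AdaGrad iterates on a nonnegative loss with `M`-Lipschitz gradient,
with step sizes bounded below by `η̃ > 0` and satisfying `η_t M h_j(t) ≤ 1`, the sum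
`Σ_t ‖∇L(w(t))‖²` is finite; in particular every component of the conditioner
`h_j(t) = (ε + Σ_{τ≤t} (∂_j L(w τ))²)^{-1/2}` converges to a strictly positive limit. -/
theorem adagrad_discrete_gradients_summable (p : ℕ)
    (L : EuclideanSpace ℝ (Fin p) → ℝ) (M : ℝ) (hM : 0 < M)
    (hL0 : ∀ x, 0 ≤ L x) (hdiff : Differentiable ℝ L)
    (hlip : ∀ x y, ‖gradient L x - gradient L y‖ ≤ M * ‖x - y‖)
    (ε : ℝ) (hε : 0 < ε) (ηtil : ℝ) (hηtil : 0 < ηtil)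
    (w : ℕ → EuclideanSpace ℝ (Fin p)) (η : ℕ → ℝ)
    (h : Fin p → ℕ → ℝ)
    (hcond : ∀ j t, h j t = 1 / Real.sqrt (ε +
      ∑ τ ∈ Finset.range (t + 1), (gradient L (w τ) j) ^ 2))
    (hstep_lb : ∀ t, ηtil ≤ η t)
    (hstep_ub : ∀ t, ∀ j, η t * M * h j t ≤ 1)
    (hupdate : ∀ t, w (t + 1) = w t - η t • (EuclideanSpace.equiv (Fin p) ℝ).symm
      (fun j => h j t * gradient L (w t) j)) :
    Summable (fun t => ‖gradient L (w t)‖ ^ 2) ∧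
      ∀ j : Fin p, ∃ c : ℝ, 0 < c ∧ Tendsto (fun t => h j t) atTop (nhds c) := by
  set a : Fin p → ℕ → ℝ := fun j t => (gradient L (w t) j) ^ 2 with ha
  set S : Fin p → ℕ → ℝ := fun j t => ε + ∑ τ ∈ Finset.range (t + 1), a j τ with hS
  have ha_nonneg : ∀ j t, 0 ≤ a j t := fun j t => sq_nonneg _
  have hS_pos : ∀ j t, 0 < S j t := fun j t =>
    add_pos_of_pos_of_nonneg hε (Finset.sum_nonneg fun τ _ => ha_nonneg j τ)
  have hh : ∀ j t, h j t = 1 / Real.sqrt (S j t) := fun j t => hcond j t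
  have hh_pos : ∀ j t, 0 < h j t := by
    intro j t
    rw [hh]
    exact one_div_pos.2 (Real.sqrt_pos.2 (hS_pos j t))
  have hη_pos : ∀ t, 0 < η t := fun t => lt_of_lt_of_le hηtil (hstep_lb t)
  -- descent inequality per step
  have hdescent : ∀ t, L (w (t + 1)) + (ηtil / 2) * ∑ j, h j t * a j t ≤ L (w t) := by
    intro t
    have hd := adagrad_descent L M hM hdiff hlip (w t) (w (t + 1) - w t)
    rw [add_sub_cancel] at hd
    have hcoord : ∀ j, (w (t + 1) - w t) j = -(η t * (h j t * gradient L (w t) j)) := by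
      intro j
      rw [hupdate t]
      simp [PiLp.sub_apply, PiLp.smul_apply]
    have hinner : (inner ℝ (gradient L (w t)) (w (t + 1) - w t) : ℝ)
        = -(η t * ∑ j, h j t * a j t) := by
      rw [PiLp.inner_apply]
      rw [Finset.mul_sum, ← Finset.sum_neg_distrib]
      apply Finset.sum_congr rfl
      intro j _
      rw [hcoord j]
      simp [ha]
      ring
    have hnorm : ‖w (t + 1) - w t‖ ^ 2 = η t ^ 2 * ∑ j, (h j t) ^ 2 * a j t := by
      rw [euclid_norm_sq]
      rw [Finset.mul_sum]
      apply Finset.sum_congr rfl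
      intro j _
      rw [hcoord j]
      simp [ha]
      ring
    rw [hinner, hnorm] at hd
    have hterm : ∀ j : Fin p, (ηtil / 2) * (h j t * a j t)
        ≤ η t * (h j t * a j t) - M / 2 * (η t ^ 2 * ((h j t) ^ 2 * a j t)) := by
      intro j
      have h1 : η t * M * h j t ≤ 1 := hstep_ub t j
      have h2 : 0 ≤ h j t * a j t := mul_nonneg (hh_pos j t).le (ha_nonneg j t)
      have h3 : (η t * M * h j t) * (η t * (h j t * a j t)) ≤ η t * (h j t * a j t) := by
        simpa using mul_le_mul_of_nonneg_right h1 (mul_nonneg (hη_pos t).le h2)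
      have h4 : ηtil * (h j t * a j t) ≤ η t * (h j t * a j t) :=
        mul_le_mul_of_nonneg_right (hstep_lb t) h2
      nlinarith [h3, h4]
    have hsum : (ηtil / 2) * ∑ j, h j t * a j t
        ≤ η t * ∑ j, h j t * a j t - M / 2 * (η t ^ 2 * ∑ j, (h j t) ^ 2 * a j t) := by
      calc (ηtil / 2) * ∑ j, h j t * a j t
          = ∑ j, ηtil / 2 * (h j t * a j t) := Finset.mul_sum _ _ _
        _ ≤ ∑ j, (η t * (h j t * a j t) - M / 2 * (η t ^ 2 * ((h j t) ^ 2 * a j t))) :=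
            Finset.sum_le_sum fun j _ => hterm j
        _ = _ := by
            rw [Finset.sum_sub_distrib, ← Finset.mul_sum]
            congr 1
            rw [← Finset.mul_sum, ← Finset.mul_sum]
    linarith
  -- cumulative bound on the weighted gradient sums
  set C : ℝ := 2 / ηtil * L (w 0) with hC
  have hC_nonneg : 0 ≤ C := mul_nonneg (by positivity) (hL0 _)
  have hcum : ∀ T, L (w T) + (ηtil / 2) * ∑ t ∈ Finset.range T, ∑ j, h j t * a j t
      ≤ L (w 0) := by
    intro T
    induction T with
    | zero => simp
    | succ T ih =>
      rw [Finset.sum_range_succ, mul_add]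
      linarith [hdescent T, ih]
  have hcum' : ∀ T, ∑ t ∈ Finset.range T, ∑ j, h j t * a j t ≤ C := by
    intro T
    have h3 : (ηtil / 2) * ∑ t ∈ Finset.range T, ∑ j, h j t * a j t ≤ L (w 0) := by
      linarith [hcum T, hL0 (w T)]
    have heq : ∑ t ∈ Finset.range T, ∑ j, h j t * a j t
        = 2 / ηtil * ((ηtil / 2) * ∑ t ∈ Finset.range T, ∑ j, h j t * a j t) := by
      field_simp
    rw [heq, hC]
    exact mul_le_mul_of_nonneg_left h3 (by positivity)
  have hcumj : ∀ (j : Fin p) T, ∑ t ∈ Finset.range T, h j t * a j t ≤ C := by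
    intro j T
    refine le_trans ?_ (hcum' T)
    apply Finset.sum_le_sum
    intro t _
    exact Finset.single_le_sum
      (fun i _ => mul_nonneg (hh_pos i t).le (ha_nonneg i t)) (Finset.mem_univ j)
  -- telescoping bound on √(S j T)
  have hkey3 : ∀ (j : Fin p) T,
      Real.sqrt (S j T) ≤ Real.sqrt ε + ∑ t ∈ Finset.range (T + 1), h j t * a j t := by
    intro j T
    induction T with
    | zero =>
      have hS0 : S j 0 = ε + a j 0 := by simp [hS]
      have hεle : ε ≤ S j 0 := by rw [hS0]; linarith [ha_nonneg j 0]
      have hd := sqrt_diff_le hε hεle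
      have hd0 : S j 0 - ε = a j 0 := by simp [hS]
      have heq2 : (S j 0 - ε) / Real.sqrt (S j 0) = h j 0 * a j 0 := by
        rw [hd0, hh]
        ring
      rw [Finset.sum_range_one]
      linarith [hd, heq2 ▸ hd]
    | succ T ih =>
      have hmono : S j T ≤ S j (T + 1) := by
        simp only [hS]
        rw [Finset.sum_range_succ (n := T + 1)]
        linarith [ha_nonneg j (T + 1)]
      have hdiffeq : S j (T + 1) - S j T = a j (T + 1) := by
        simp only [hS]
        rw [Finset.sum_range_succ (n := T + 1)]
        ring
      have hd := sqrt_diff_le (hS_pos j T) hmono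
      have heq2 : (S j (T + 1) - S j T) / Real.sqrt (S j (T + 1))
          = h j (T + 1) * a j (T + 1) := by
        rw [hdiffeq, hh]
        ring
      rw [Finset.sum_range_succ (n := T + 1)]
      linarith [heq2 ▸ hd, ih]
  -- boundedness of S, hence summability of the squared gradients
  have hSbnd : ∀ (j : Fin p) T, S j T ≤ (Real.sqrt ε + C) ^ 2 := by
    intro j T
    have h1 : Real.sqrt (S j T) ≤ Real.sqrt ε + C :=
      le_trans (hkey3 j T) (by linarith [hcumj j (T + 1)])
    calc S j T = (Real.sqrt (S j T)) ^ 2 := (Real.sq_sqrt (hS_pos j T).le).symm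
      _ ≤ (Real.sqrt ε + C) ^ 2 := pow_le_pow_left₀ (Real.sqrt_nonneg _) h1 2
  have hsuma : ∀ j : Fin p, Summable (a j) := by
    intro j
    apply summable_of_sum_range_le (ha_nonneg j) (c := (Real.sqrt ε + C) ^ 2)
    intro n
    calc ∑ t ∈ Finset.range n, a j t ≤ ∑ t ∈ Finset.range (n + 1), a j t :=
        Finset.sum_le_sum_of_subset_of_nonneg
          (Finset.range_subset_range.2 (Nat.le_succ n)) (fun t _ _ => ha_nonneg j t)
      _ ≤ (Real.sqrt ε + C) ^ 2 := by
          have hb := hSbnd j n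
          simp only [hS] at hb
          linarith
  constructor
  · have heqn : (fun t => ‖gradient L (w t)‖ ^ 2) = fun t => ∑ j, a j t := by
      funext t
      exact euclid_norm_sq p (gradient L (w t))
    rw [heqn]
    exact summable_sum fun j _ => hsuma j
  · intro j
    set T0 := ∑' t, a j t with hT0
    have hT0nn : 0 ≤ T0 := tsum_nonneg (ha_nonneg j)
    have hpos : 0 < ε + T0 := by linarith
    have hlim : Tendsto (fun t => S j t) atTop (nhds (ε + T0)) := by
      have h1 : Tendsto (fun n => ∑ t ∈ Finset.range n, a j t) atTop (nhds T0) :=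
        (hsuma j).hasSum.tendsto_sum_nat
      have h2 : Tendsto (fun t : ℕ => t + 1) atTop atTop := tendsto_add_atTop_nat 1
      exact tendsto_const_nhds.add (h1.comp h2)
    have hsqrt : Tendsto (fun t => Real.sqrt (S j t)) atTop
        (nhds (Real.sqrt (ε + T0))) := (Real.continuous_sqrt.tendsto _).comp hlim
    refine ⟨1 / Real.sqrt (ε + T0), one_div_pos.2 (Real.sqrt_pos.2 hpos), ?_⟩
    have heqh : (fun t => h j t) = fun t => 1 / Real.sqrt (S j t) :=
      funext fun t => hh j t
    rw [heqh]
    exact tendsto_const_nhds.div hsqrt (ne_of_gt (Real.sqrt_pos.2 hpos))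
end

section
/- Let f, g_1, …, g_N : ℝ^d → ℝ be continuously differentiable. Suppose (x_k) is a sequence of feasible points (g_i(x_k) ≤ 0 for all i and k) converging to a point x, and suppose there are nonnegative reals ε_k, δ_k with ε_k → 0 and δ_k → 0 such that each x_k is an (ε_k, δ_k)-KKT point: there exist λ^k_1, …, λ^k_N ≥ 0 with ‖∇f(x_k) + Σ_{i=1}^N λ^k_i ∇g_i(x_k)‖ ≤ ε_k and λ^k_i · g_i(x_k) ≥ −δ_k for every i. If x satisfies the Mangasarian–Fromovitz constraint qualification — there exists a ∈ ℝ^d such that ⟨∇g_i(x), a⟩ > 0 for every i with g_i(x) = 0 — then x is a KKT point: g_i(x) ≤ 0 for all i, and there exist λ_1, …, λ_N ≥ 0 with ∇f(x) + Σ_{i=1}^N λ_i ∇g_i(x) = 0 and λ_i · g_i(x) = 0 for every i. -/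
open Filter

private lemma bound_of_eventually_bound {u : ℕ → ℝ} {C : ℝ}
    (h : ∀ᶠ k in atTop, u k ≤ C) : ∃ C', ∀ k, u k ≤ C' := by
  obtain ⟨K, hK⟩ := eventually_atTop.1 h
  refine ⟨max C ((Finset.range (K+1)).sup' (by simp) u), fun k => ?_⟩
  rcases le_or_gt K k with h1 | h1
  · exact le_max_of_le_left (hK k h1)
  · exact le_max_of_le_right (Finset.le_sup' u (Finset.mem_range.2 (by omega)))

private lemma grad_continuous {d : ℕ} {h : EuclideanSpace ℝ (Fin d) → ℝ}
    (hh : ContDiff ℝ 1 h) : Continuous (gradient h) :=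
  (InnerProductSpace.toDual ℝ _).symm.continuous.comp (hh.continuous_fderiv one_ne_zero)

/-- Under the Mangasarian–Fromovitz constraint qualification, a limit of
`(ε_k, δ_k)`-KKT points (with `ε_k → 0`, `δ_k → 0`) of the smooth constrained problem
`min f` subject to `g_i ≤ 0` is a genuine KKT point. -/
theorem approx_KKT_limit_is_KKT (d N : ℕ)
    (f : EuclideanSpace ℝ (Fin d) → ℝ) (g : Fin N → EuclideanSpace ℝ (Fin d) → ℝ)
    (hf : ContDiff ℝ 1 f) (hg : ∀ i, ContDiff ℝ 1 (g i))
    (xk : ℕ → EuclideanSpace ℝ (Fin d)) (x : EuclideanSpace ℝ (Fin d))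
    (hfeas : ∀ k, ∀ i, g i (xk k) ≤ 0)
    (hconv : Tendsto xk atTop (nhds x))
    (εk δk : ℕ → ℝ) (hεk_nonneg : ∀ k, 0 ≤ εk k) (hδk_nonneg : ∀ k, 0 ≤ δk k)
    (hεk : Tendsto εk atTop (nhds 0)) (hδk : Tendsto δk atTop (nhds 0))
    (hKKT : ∀ k, ∃ lam : Fin N → ℝ, (∀ i, 0 ≤ lam i) ∧
      ‖gradient f (xk k) + ∑ i, lam i • gradient (g i) (xk k)‖ ≤ εk k ∧
      ∀ i, -(δk k) ≤ lam i * g i (xk k))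
    (hMFCQ : ∃ a : EuclideanSpace ℝ (Fin d), ∀ i, g i x = 0 →
      0 < (inner ℝ (gradient (g i) x) a : ℝ)) :
    (∀ i, g i x ≤ 0) ∧ ∃ lam : Fin N → ℝ, (∀ i, 0 ≤ lam i) ∧
      gradient f x + ∑ i, lam i • gradient (g i) x = 0 ∧
      ∀ i, lam i * g i x = 0 := by
  classical
  choose lam hlam_nonneg hlam_norm hlam_comp using hKKT
  obtain ⟨a, ha⟩ := hMFCQ
  -- feasibility at x
  have hgt : ∀ i, Tendsto (fun k => g i (xk k)) atTop (nhds (g i x)) :=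
    fun i => ((hg i).continuous.tendsto x).comp hconv
  have hgx : ∀ i, g i x ≤ 0 := fun i =>
    le_of_tendsto (hgt i) (Eventually.of_forall (fun k => hfeas k i))
  -- gradient convergence
  have hgradf : Tendsto (fun k => gradient f (xk k)) atTop (nhds (gradient f x)) :=
    ((grad_continuous hf).tendsto x).comp hconv
  have hgradg : ∀ i, Tendsto (fun k => gradient (g i) (xk k)) atTop (nhds (gradient (g i) x)) :=
    fun i => ((grad_continuous (hg i)).tendsto x).comp hconv
  -- inactive multipliers tend to 0
  have hinactive : ∀ i, g i x < 0 → Tendsto (fun k => lam k i) atTop (nhds 0) := by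
    intro i hi
    have hev : ∀ᶠ k in atTop, g i (xk k) < g i x / 2 :=
      (hgt i).eventually_lt_const (by linarith)
    have key : ∀ᶠ k in atTop, lam k i ≤ δk k * (2 / (-(g i x))) := by
      filter_upwards [hev] with k hk
      have h1 := hlam_comp k i
      have h2 : lam k i * g i (xk k) ≤ lam k i * (g i x / 2) :=
        mul_le_mul_of_nonneg_left hk.le (hlam_nonneg k i)
      have h3 : 0 < -(g i x) := by linarith
      have h4 : lam k i * (-(g i x)) ≤ δk k * 2 := by nlinarith
      rw [← mul_div_assoc, le_div_iff₀ h3]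
      exact h4
    have hupper : Tendsto (fun k => δk k * (2 / (-(g i x)))) atTop (nhds 0) := by
      simpa using hδk.mul_const (2 / (-(g i x)))
    exact tendsto_of_tendsto_of_tendsto_of_le_of_le' tendsto_const_nhds hupper
      (Eventually.of_forall (fun k => hlam_nonneg k i)) key
  -- inner product of approximate stationarity with a tends to 0
  set v : ℕ → EuclideanSpace ℝ (Fin d) :=
    fun k => gradient f (xk k) + ∑ i, lam k i • gradient (g i) (xk k) with hv
  have hinner_v : Tendsto (fun k => (inner ℝ (v k) a : ℝ)) atTop (nhds 0) := by
    refine squeeze_zero_norm (fun k => ?_) (by simpa using hεk.mul_const ‖a‖)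
    exact (abs_real_inner_le_norm _ _).trans
      (mul_le_mul_of_nonneg_right (hlam_norm k) (norm_nonneg a))
  have hsum_eq : ∀ k, ∑ i, lam k i * (inner ℝ (gradient (g i) (xk k)) a : ℝ)
      = (inner ℝ (v k) a : ℝ) - inner ℝ (gradient f (xk k)) a := by
    intro k
    simp only [hv, inner_add_left, sum_inner, real_inner_smul_left]
    ring
  -- the active sum converges
  set A : Finset (Fin N) := Finset.univ.filter (fun i => g i x = 0) with hA
  have hginner : ∀ i, Tendsto (fun k => (inner ℝ (gradient (g i) (xk k)) a : ℝ)) atTop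
      (nhds (inner ℝ (gradient (g i) x) a : ℝ)) := fun i => ((hgradg i).inner tendsto_const_nhds)
  have hinact_term : ∀ i ∉ A, Tendsto (fun k => lam k i * (inner ℝ (gradient (g i) (xk k)) a : ℝ))
      atTop (nhds 0) := by
    intro i hi
    have hlt : g i x < 0 := by
      rcases (hgx i).lt_or_eq with h | h
      · exact h
      · exact absurd (by simp [hA, h]) hi
    simpa using (hinactive i hlt).mul (hginner i)
  have htot : Tendsto (fun k => ∑ i, lam k i * (inner ℝ (gradient (g i) (xk k)) a : ℝ)) atTop
      (nhds (0 - inner ℝ (gradient f x) a)) := by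
    simp only [hsum_eq]
    exact hinner_v.sub ((hgradf).inner tendsto_const_nhds)
  have hw : Tendsto (fun k => ∑ i ∈ A, lam k i * (inner ℝ (gradient (g i) (xk k)) a : ℝ)) atTop
      (nhds (0 - inner ℝ (gradient f x) a - 0)) := by
    have hsplit : ∀ k, ∑ i ∈ A, lam k i * (inner ℝ (gradient (g i) (xk k)) a : ℝ)
        = (∑ i, lam k i * (inner ℝ (gradient (g i) (xk k)) a : ℝ))
          - ∑ i ∈ Aᶜ, lam k i * (inner ℝ (gradient (g i) (xk k)) a : ℝ) := by
      intro k
      rw [eq_sub_iff_add_eq, Finset.sum_add_sum_compl]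
    simp only [hsplit]
    refine htot.sub ?_
    have : Tendsto (fun k => ∑ i ∈ Aᶜ, lam k i * (inner ℝ (gradient (g i) (xk k)) a : ℝ)) atTop
        (nhds (∑ i ∈ Aᶜ, (0:ℝ))) := by
      refine tendsto_finset_sum _ (fun i hi => hinact_term i ?_)
      simpa using (Finset.mem_compl.1 hi)
    simpa using this
  -- per-coordinate boundedness of the multipliers
  have hbound : ∀ i, ∃ C, ∀ k, lam k i ≤ C := by
    intro i
    rcases (hgx i).lt_or_eq with hlt | heq
    · exact bound_of_eventually_bound ((hinactive i hlt).eventually_le_const one_pos)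
    · have hiA : i ∈ A := by simp [hA, heq.symm]
      have hAne : A.Nonempty := ⟨i, hiA⟩
      set c : ℝ := A.inf' hAne (fun j => (inner ℝ (gradient (g j) x) a : ℝ)) with hc
      have hcpos : 0 < c := by
        rw [hc, Finset.lt_inf'_iff]
        intro j hj
        exact ha j (by simpa [hA] using hj)
      have ev1 : ∀ᶠ k in atTop, ∀ j ∈ A, c / 2 ≤ (inner ℝ (gradient (g j) (xk k)) a : ℝ) := by
        rw [Filter.eventually_all_finset]
        intro j hj
        have hcle : c ≤ (inner ℝ (gradient (g j) x) a : ℝ) := Finset.inf'_le _ hj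
        exact ((hginner j).eventually_const_lt (by linarith)).mono (fun k hk => hk.le)
      set T : ℝ := 0 - inner ℝ (gradient f x) a - 0 with hT
      have ev2 : ∀ᶠ k in atTop,
          ∑ j ∈ A, lam k j * (inner ℝ (gradient (g j) (xk k)) a : ℝ) ≤ T + 1 :=
        hw.eventually_le_const (lt_add_one T)
      have ev3 : ∀ᶠ k in atTop, lam k i ≤ (T + 1) / (c / 2) := by
        filter_upwards [ev1, ev2] with k h1 h2
        have hterm : lam k i * (c / 2) ≤ ∑ j ∈ A, lam k j * (inner ℝ (gradient (g j) (xk k)) a : ℝ) := by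
          refine le_trans (mul_le_mul_of_nonneg_left (h1 i hiA) (hlam_nonneg k i)) ?_
          exact Finset.single_le_sum (f := fun j => lam k j * (inner ℝ (gradient (g j) (xk k)) a : ℝ))
            (fun j hj => mul_nonneg (hlam_nonneg k j) (le_trans (by linarith) (h1 j hj))) hiA
        rw [le_div_iff₀ (by linarith)]
        linarith
      exact bound_of_eventually_bound ev3
  choose C hC using hbound
  -- extract a convergent subsequence of the multipliers
  have hcomp : IsCompact (Set.pi Set.univ fun i : Fin N => Set.Icc (0:ℝ) (C i)) :=
    isCompact_univ_pi fun i => isCompact_Icc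
  have hmem : ∀ k, lam k ∈ Set.pi Set.univ fun i : Fin N => Set.Icc (0:ℝ) (C i) :=
    fun k => Set.mem_univ_pi.2 fun i => ⟨hlam_nonneg k i, hC i k⟩
  obtain ⟨L, hLmem, φ, hφ, hLtend⟩ := hcomp.tendsto_subseq hmem
  have hLcoord : ∀ i, Tendsto (fun k => lam (φ k) i) atTop (nhds (L i)) :=
    fun i => tendsto_pi_nhds.1 hLtend i
  refine ⟨hgx, L, fun i => (hLmem i (Set.mem_univ i)).1, ?_, ?_⟩
  · -- gradient equation
    have hvφ : Tendsto (fun k => v (φ k)) atTop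
        (nhds (gradient f x + ∑ i, L i • gradient (g i) x)) := by
      refine Tendsto.add (hgradf.comp hφ.tendsto_atTop) ?_
      exact tendsto_finset_sum _ fun i _ =>
        (hLcoord i).smul ((hgradg i).comp hφ.tendsto_atTop)
    have hle : ‖gradient f x + ∑ i, L i • gradient (g i) x‖ ≤ 0 :=
      le_of_tendsto_of_tendsto' hvφ.norm (hεk.comp hφ.tendsto_atTop)
        (fun k => hlam_norm (φ k))
    exact norm_le_zero_iff.1 hle
  · -- complementarity
    intro i
    rcases (hgx i).lt_or_eq with hlt | heq
    · have hL0 : L i = 0 :=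
        tendsto_nhds_unique (hLcoord i) ((hinactive i hlt).comp hφ.tendsto_atTop)
      simp [hL0]
    · simp [heq]
end
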